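/- arXiv:2510.16667 — 6 statements merged into one kernel-verified Lean document; each statement's English description precedes it below -/
import Mathlib

section
/- There exists a sequence (Q_n)_{n≥1} of noncommutative polynomials in ℂ⟨X_1,…,X_d⟩, with Q_n of degree n, such that liminf_{n→∞} ‖Q_n(x)‖ / (√((1/3)(n+1)(n+3/2)(n+2)) · ‖Q_n(x)‖₂) ≥ √(3/8). -/
open scoped ComplexOrder TensorProduct

noncomputable section

/-- Free Chebyshev polynomials, indexed by a word read left-to-right:
`cheb [i_n, ..., i_1] = P_{i_n, ..., i_1}`. -/
def cheb {d : ℕ} : List (Fin d) → FreeAlgebra ℂ (Fin d)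
  | [] => 1
  | [i] => FreeAlgebra.ι ℂ i
  | i :: j :: t => FreeAlgebra.ι ℂ i * cheb (j :: t) - (if i = j then (1 : ℂ) else 0) • cheb t

/-- A faithful tracial state on a `*`-algebra. -/
def IsFaithfulTracialState {A : Type*} [Ring A] [StarRing A] [Algebra ℂ A]
    (τ : A →ₗ[ℂ] ℂ) : Prop :=
  τ 1 = 1 ∧ (∀ a : A, 0 ≤ τ (star a * a)) ∧ (∀ a : A, τ (star a * a) = 0 → a = 0) ∧
    ∀ a b : A, τ (a * b) = τ (b * a)

/-- The `k`-th moment of the standard semicircle distribution on `[-2, 2]`. -/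
def semicircleMoment (k : ℕ) : ℝ :=
  (1 / (2 * Real.pi)) * ∫ t in (-2 : ℝ)..2, t ^ k * Real.sqrt (4 - t ^ 2)

/-- `x` is a free semicircular system with respect to `τ`. -/
def IsFreeSemicircular {A : Type*} [Ring A] [StarRing A] [Algebra ℂ A] {d : ℕ}
    (τ : A →ₗ[ℂ] ℂ) (x : Fin d → A) : Prop :=
  (∀ i, star (x i) = x i) ∧
  (∀ i k, τ (x i ^ k) = (semicircleMoment k : ℂ)) ∧
  ∀ (k : ℕ) (j : Fin (k + 1) → Fin d),
    (∀ s : Fin k, j s.castSucc ≠ j s.succ) →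
    ∀ p : Fin (k + 1) → Polynomial ℂ,
      τ ((List.ofFn fun s : Fin (k + 1) =>
        Polynomial.aeval (x (j s)) (p s)
          - τ (Polynomial.aeval (x (j s)) (p s)) • (1 : A))).prod = 0

/-- The `L²`-norm `‖z‖₂ = τ(z z*)^{1/2}` associated with `τ`. -/
def l2norm {A : Type*} [Ring A] [StarRing A] [Algebra ℂ A] (τ : A →ₗ[ℂ] ℂ) (z : A) : ℝ :=
  Real.sqrt (τ (z * star z)).re

/-- Noncommutative polynomials of degree at most `n`. -/
def degLE (d n : ℕ) : Submodule ℂ (FreeAlgebra ℂ (Fin d)) :=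
  Submodule.span ℂ
    {w | ∃ I : List (Fin d), I.length ≤ n ∧ w = (I.map (FreeAlgebra.ι ℂ)).prod}

/-- Elements homogeneous of degree `n`. -/
def chebHomog {A : Type*} [Ring A] [Algebra ℂ A] {d : ℕ} (x : Fin d → A) (n : ℕ) :
    Submodule ℂ A :=
  Submodule.span ℂ
    {a | ∃ I : List (Fin d), I.length = n ∧ a = FreeAlgebra.lift ℂ x (cheb I)}

/-- `‖P_n f‖₂`, the `ℓ²`-norm of the degree-`n` free Chebyshev coefficients of `f`. -/
def chebProjL2 {A : Type*} [Ring A] [StarRing A] [Algebra ℂ A] {d : ℕ}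
    (τ : A →ₗ[ℂ] ℂ) (x : Fin d → A) (n : ℕ) (f : A) : ℝ :=
  Real.sqrt (∑ I : Fin n → Fin d,
    ‖τ (f * star (FreeAlgebra.lift ℂ x (cheb (List.ofFn I))))‖ ^ 2)

/-- The rescaled Chebyshev polynomials of the second kind, `𝒰_n(X) = U_n(X/2)`. -/
def chebU : ℕ → Polynomial ℂ
  | 0 => 1
  | 1 => Polynomial.X
  | n + 2 => Polynomial.X * chebU (n + 1) - chebU n

end

set_option linter.unusedSectionVars false
noncomputable section

open Polynomial Real

namespace HO

def uR : ℕ → Polynomial ℝ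
  | 0 => 1
  | 1 => Polynomial.X
  | n + 2 => Polynomial.X * uR (n + 1) - uR n

lemma uR_eval_cos (θ : ℝ) : ∀ n : ℕ, (uR n).eval (2 * Real.cos θ) * Real.sin θ
    = Real.sin (((n : ℝ) + 1) * θ)
  | 0 => by simp [uR]
  | 1 => by
      simp only [uR, eval_X]
      push_cast
      rw [show ((1:ℝ)+1)*θ = θ + θ by ring, Real.sin_add]
      ring
  | n + 2 => by
      have h1 := uR_eval_cos θ (n + 1)
      have h0 := uR_eval_cos θ n
      simp only [uR, eval_sub, eval_mul, eval_X]
      have e1 : (((n:ℕ):ℝ) + 2 + 1) * θ = (((n:ℝ)+1)+1) * θ + θ := by ring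
      have e2 : (((n:ℕ):ℝ) + 1) * θ = (((n:ℝ)+1)+1) * θ - θ := by ring
      push_cast
      rw [e1, Real.sin_add]
      rw [e2, Real.sin_sub] at h0
      push_cast at h1 h0
      linear_combination (2 * Real.cos θ) * h1 - h0

lemma abs_sin_nat_mul (θ : ℝ) : ∀ n : ℕ, |Real.sin ((n : ℝ) * θ)| ≤ (n : ℝ) * |Real.sin θ|
  | 0 => by simp
  | n + 1 => by
      have h := abs_sin_nat_mul θ n
      have e : (((n:ℕ):ℝ) + 1) * θ = (n : ℝ) * θ + θ := by ring
      push_cast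
      rw [e, Real.sin_add]
      refine (abs_add_le _ _).trans ?_
      rw [abs_mul, abs_mul]
      have c1 : |Real.cos θ| ≤ 1 := Real.abs_cos_le_one θ
      have c2 : |Real.cos ((n:ℝ)*θ)| ≤ 1 := Real.abs_cos_le_one _
      have n1 : (0:ℝ) ≤ |Real.sin ((n:ℝ)*θ)| := abs_nonneg _
      have n2 : (0:ℝ) ≤ |Real.sin θ| := abs_nonneg _
      nlinarith

lemma uR_eval_two : ∀ n : ℕ, (uR n).eval 2 = (n : ℝ) + 1
  | 0 => by simp [uR]
  | 1 => by simp [uR]; norm_num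
  | n + 2 => by
      simp only [uR, eval_sub, eval_mul, eval_X, uR_eval_two (n+1), uR_eval_two n]
      push_cast; ring

lemma uR_eval_neg_two : ∀ n : ℕ, (uR n).eval (-2) = (-1 : ℝ) ^ n * ((n : ℝ) + 1)
  | 0 => by simp [uR]
  | 1 => by simp [uR]; norm_num
  | n + 2 => by
      simp only [uR, eval_sub, eval_mul, eval_X, uR_eval_neg_two (n+1), uR_eval_neg_two n]
      push_cast; ring

lemma uR_abs_le {t : ℝ} (ht : t ∈ Set.Icc (-2 : ℝ) 2) (n : ℕ) :
    |(uR n).eval t| ≤ (n : ℝ) + 1 := by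
  obtain ⟨h1, h2⟩ := ht
  set θ := Real.arccos (t / 2) with hθ
  have hc : 2 * Real.cos θ = t := by
    rw [hθ, Real.cos_arccos (by linarith) (by linarith)]; ring
  by_cases hs : Real.sin θ = 0
  · have hfac : (Real.cos θ - 1) * (Real.cos θ + 1) = 0 := by
      have := Real.sin_sq_add_cos_sq θ
      rw [hs] at this; nlinarith
    rcases mul_eq_zero.mp hfac with h' | h'
    · have : t = 2 := by rw [← hc]; nlinarith
      rw [this, uR_eval_two, abs_of_nonneg (by positivity)]
    · have : t = -2 := by rw [← hc]; nlinarith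
      rw [this, uR_eval_neg_two, abs_mul, abs_pow, abs_neg, abs_one, one_pow, one_mul,
        abs_of_nonneg (by positivity)]
  · have hkey := uR_eval_cos θ n
    rw [hc] at hkey
    have habs : |(uR n).eval t| * |Real.sin θ| = |Real.sin (((n:ℝ)+1) * θ)| := by
      rw [← abs_mul, hkey]
    have hb : |Real.sin (((n:ℝ)+1) * θ)| ≤ ((n:ℝ)+1) * |Real.sin θ| := by
      have := abs_sin_nat_mul θ (n+1)
      push_cast at this
      exact this
    have hpos : 0 < |Real.sin θ| := abs_pos.mpr hs
    have := habs ▸ hb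
    calc |(uR n).eval t| = |(uR n).eval t| * |Real.sin θ| / |Real.sin θ| :=
          (mul_div_cancel_right₀ _ (ne_of_gt hpos)).symm
      _ ≤ ((n:ℝ)+1) * |Real.sin θ| / |Real.sin θ| := by gcongr
      _ = (n:ℝ)+1 := mul_div_cancel_right₀ _ (ne_of_gt hpos)

end HO
open Polynomial Real MeasureTheory intervalIntegral

namespace HO

/-- density factor -/
def G4 (t : ℝ) : ℝ := Real.sqrt (4 - t ^ 2)

lemma contG4 : Continuous G4 := Real.continuous_sqrt.comp (by continuity)

lemma intble (p : Polynomial ℝ) :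
    IntervalIntegrable (fun t => p.eval t * G4 t) volume (-2 : ℝ) 2 :=
  ((p.continuous_aeval).mul contG4).intervalIntegrable _ _

def Lr (p : Polynomial ℝ) : ℝ := (1 / (2 * Real.pi)) * ∫ t in (-2 : ℝ)..2, p.eval t * G4 t

lemma Lr_add (p q : Polynomial ℝ) : Lr (p + q) = Lr p + Lr q := by
  unfold Lr
  rw [← mul_add, ← intervalIntegral.integral_add (intble p) (intble q)]
  congr 1
  apply intervalIntegral.integral_congr
  intro t _
  simp [add_mul]

lemma Lr_smul (c : ℝ) (p : Polynomial ℝ) : Lr (c • p) = c * Lr p := by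
  unfold Lr
  rw [show (∫ t in (-2:ℝ)..2, (c • p).eval t * G4 t) = ∫ t in (-2:ℝ)..2, c * (p.eval t * G4 t) by
    apply intervalIntegral.integral_congr; intro t _; simp [mul_assoc]]
  rw [intervalIntegral.integral_const_mul]
  ring

-- substitution t = 2 cos θ
lemma integral_subst (p : Polynomial ℝ) :
    (∫ t in (-2 : ℝ)..2, p.eval t * G4 t)
      = ∫ θ in (0 : ℝ)..Real.pi, 4 * ((p.eval (2 * Real.cos θ) * Real.sin θ) * Real.sin θ) := by
  have h := intervalIntegral.integral_comp_smul_deriv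
    (a := (0:ℝ)) (b := Real.pi)
    (f := fun θ => 2 * Real.cos θ) (f' := fun θ => -2 * Real.sin θ)
    (g := fun t => p.eval t * G4 t)
    (fun θ _ => by simpa using ((Real.hasDerivAt_cos θ).const_mul 2))
    (by fun_prop)
    ((p.continuous_aeval).mul contG4)
  simp only [Real.cos_zero, Real.cos_pi, mul_one] at h
  rw [show (2 : ℝ) * -1 = -2 by norm_num] at h
  rw [intervalIntegral.integral_symm (-2 : ℝ) 2] at h
  have h3 : (∫ t in (-2:ℝ)..2, p.eval t * G4 t)
      = ∫ θ in (0:ℝ)..Real.pi,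
          -((-2 * Real.sin θ) • ((fun t => p.eval t * G4 t) ∘ fun θ => 2 * Real.cos θ) θ) := by
    rw [intervalIntegral.integral_neg]
    linarith [h]
  rw [h3]
  apply intervalIntegral.integral_congr
  intro θ hθ
  rw [Set.uIcc_of_le Real.pi_nonneg] at hθ
  have hsin : 0 ≤ Real.sin θ := Real.sin_nonneg_of_nonneg_of_le_pi hθ.1 hθ.2
  have hG : G4 (2 * Real.cos θ) = 2 * Real.sin θ := by
    unfold G4
    rw [show 4 - (2 * Real.cos θ) ^ 2 = (2 * Real.sin θ)^2 by
      nlinarith [Real.sin_sq_add_cos_sq θ]]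
    exact Real.sqrt_sq (by positivity)
  simp only [Function.comp, smul_eq_mul, hG]
  ring

lemma integral_cos_nat (k : ℕ) :
    (∫ θ in (0 : ℝ)..Real.pi, Real.cos ((k : ℝ) * θ)) = if k = 0 then Real.pi else 0 := by
  rcases Nat.eq_zero_or_pos k with hk | hk
  · subst hk; simp
  · have hk' : (k : ℝ) ≠ 0 := Nat.cast_ne_zero.mpr hk.ne'
    rw [intervalIntegral.integral_comp_mul_left (f := Real.cos) hk']
    simp [integral_cos, Real.sin_nat_mul_pi, if_neg hk.ne']

lemma Lr_uR (m : ℕ) : Lr (uR m) = if m = 0 then 1 else 0 := by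
  unfold Lr
  rw [integral_subst]
  have key : ∀ θ ∈ Set.uIcc (0:ℝ) Real.pi,
      4 * (((uR m).eval (2 * Real.cos θ) * Real.sin θ) * Real.sin θ)
        = 2 * (Real.cos ((m : ℝ) * θ) - Real.cos (((m:ℝ) + 2) * θ)) := by
    intro θ _
    rw [uR_eval_cos θ m]
    have : Real.cos ((m:ℝ) * θ) - Real.cos (((m:ℝ)+2) * θ)
        = 2 * (Real.sin (((m:ℝ)+1)*θ) * Real.sin θ) := by
      rw [show ((m:ℝ)) * θ = ((m:ℝ)+1)*θ - θ by ring, show ((m:ℝ)+2) * θ = ((m:ℝ)+1)*θ + θ by ring,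
        Real.cos_sub, Real.cos_add]
      ring
    rw [this]; ring
  rw [intervalIntegral.integral_congr key]
  have i1 : (∫ θ in (0:ℝ)..Real.pi, 2 * (Real.cos ((m:ℝ)*θ) - Real.cos (((m:ℝ)+2)*θ)))
      = 2 * ((∫ θ in (0:ℝ)..Real.pi, Real.cos ((m:ℝ)*θ))
          - ∫ θ in (0:ℝ)..Real.pi, Real.cos (((m:ℝ)+2)*θ)) := by
    rw [intervalIntegral.integral_const_mul, intervalIntegral.integral_sub] <;>
      first
        | rfl
        | exact (Real.continuous_cos.comp (by continuity)).intervalIntegrable _ _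
  rw [i1]
  have i3 := integral_cos_nat (m + 2)
  rw [if_neg (by omega : ¬ m + 2 = 0)] at i3
  push_cast at i3
  rw [integral_cos_nat m, i3]
  rcases Nat.eq_zero_or_pos m with hm | hm
  · subst hm
    rw [if_pos rfl, if_pos rfl]
    have : Real.pi ≠ 0 := Real.pi_ne_zero
    field_simp
    ring
  · rw [if_neg hm.ne', if_neg hm.ne']
    ring

end HO
namespace HO
open Polynomial

lemma Lr_sub (p q : Polynomial ℝ) : Lr (p - q) = Lr p - Lr q := by
  have := Lr_add (p - q) q
  simp only [sub_add_cancel] at this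
  linarith

lemma uR_rec (n : ℕ) : uR (n + 2) = Polynomial.X * uR (n + 1) - uR n := rfl

lemma orth : ∀ i j : ℕ, Lr (uR i * uR j) = if i = j then 1 else 0
  | 0, j => by
      rw [show uR 0 = 1 from rfl, one_mul, Lr_uR]
      simp [eq_comm]
  | 1, 0 => by
      rw [show uR 0 = 1 from rfl, mul_one, Lr_uR]
  | 1, (j+1) => by
      have e : uR 1 * uR (j + 1) = uR (j + 2) + uR j := by
        rw [uR_rec j, show uR 1 = Polynomial.X from rfl]; ring
      rw [e, Lr_add, Lr_uR, Lr_uR]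
      rcases Nat.eq_zero_or_pos j with hj | hj
      · subst hj; norm_num
      · rw [if_neg (by omega), if_neg (by omega), if_neg (by omega)]; norm_num
  | (i+2), 0 => by
      rw [show uR 0 = 1 from rfl, mul_one, Lr_uR]
  | (i+2), (j+1) => by
      have e : uR (i+2) * uR (j+1)
          = uR (i+1) * uR (j+2) + uR (i+1) * uR j - uR i * uR (j+1) := by
        rw [uR_rec i, uR_rec j]; ring
      rw [e, Lr_sub, Lr_add, orth (i+1) (j+2), orth (i+1) j, orth i (j+1)]
      split_ifs <;> first | (exfalso; omega) | norm_num

lemma Htriple : ∀ i j k : ℕ, Lr (uR i * uR j * uR k)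
    = if (k ≤ i + j ∧ i ≤ j + k ∧ j ≤ i + k ∧ (i + j + k) % 2 = 0) then 1 else 0
  | 0, j, k => by
      rw [show uR 0 = 1 from rfl, one_mul, orth j k]
      split_ifs <;> first | (exfalso; omega) | norm_num
  | 1, j, k => by
      rcases j with _ | j
      · rw [show uR 0 = 1 from rfl, mul_one, orth 1 k]
        split_ifs <;> first | (exfalso; omega) | norm_num
      · have e : uR 1 * uR (j+1) * uR k = uR (j+2) * uR k + uR j * uR k := by
          rw [uR_rec j, show uR 1 = Polynomial.X from rfl]; ring
        rw [e, Lr_add, orth (j+2) k, orth j k]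
        split_ifs <;> first | (exfalso; omega) | norm_num
  | (i+2), j, k => by
      rcases j with _ | j
      · have e : uR (i+2) * uR 0 * uR k = uR (i+2) * uR k := by
          rw [show uR 0 = 1 from rfl]; ring
        rw [e, orth (i+2) k]
        split_ifs <;> first | (exfalso; omega) | norm_num
      · have e : uR (i+2) * uR (j+1) * uR k
            = uR (i+1) * uR (j+2) * uR k + uR (i+1) * uR j * uR k
              - uR i * uR (j+1) * uR k := by
          rw [uR_rec i, uR_rec j]; ring
        rw [e, Lr_sub, Lr_add, Htriple (i+1) (j+2) k, Htriple (i+1) j k, Htriple i (j+1) k]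
        split_ifs <;> first | (exfalso; omega) | norm_num

lemma Htriple_nonneg (i j k : ℕ) : 0 ≤ Lr (uR i * uR j * uR k) := by
  rw [Htriple]; split_ifs <;> norm_num

end HO
namespace HO
open scoped ComplexOrder

section CStar
variable {A : Type*} [NormedRing A] [StarRing A]
    [CStarRing A] [CompleteSpace A] [NormedAlgebra ℂ A] [StarModule ℂ A]

lemma tau_nonneg [PartialOrder A] [StarOrderedRing A] (τ : A →ₗ[ℂ] ℂ)
    (hpos : ∀ a : A, 0 ≤ τ (star a * a)) {z : A} (hz : 0 ≤ z) : 0 ≤ τ z := by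
  rw [StarOrderedRing.nonneg_iff] at hz
  induction hz using AddSubmonoid.closure_induction with
  | mem x hx => obtain ⟨s, rfl⟩ := hx; exact hpos s
  | zero => simp
  | add x y _ _ hx hy => rw [map_add]; exact add_nonneg hx hy

lemma re_pos_of_nonneg_ne (z : ℂ) (h0 : 0 ≤ z) (hne : z ≠ 0) : 0 < z.re := by
  rw [Complex.le_def] at h0
  simp only [Complex.zero_re, Complex.zero_im] at h0
  rcases lt_or_eq_of_le h0.1 with h | h
  · exact h
  · exfalso; exact hne (Complex.ext h.symm h0.2.symm)

lemma norm_le_of_moments (τ : A →ₗ[ℂ] ℂ)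
    (hpos : ∀ a : A, 0 ≤ τ (star a * a)) (hfaith : ∀ a : A, τ (star a * a) = 0 → a = 0)
    {a : A} (ha : IsSelfAdjoint a) {M : ℝ} (hM : 0 ≤ M)
    (hmom : ∀ m : ℕ, (τ (a ^ (2 * m))).re ≤ M ^ (2 * m)) : ‖a‖ ≤ M := by
  letI : CStarAlgebra A := { }
  letI := CStarAlgebra.spectralOrder A
  haveI := CStarAlgebra.spectralOrderedRing A
  by_contra hlt
  push_neg at hlt
  set r : ℝ := ‖a‖ with hr
  set M' : ℝ := (M + r) / 2 with hM'def
  have hMM' : M < M' := by rw [hM'def]; linarith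
  have hM'r : M' < r := by rw [hM'def]; linarith
  have hM'0 : 0 < M' := by rw [hM'def]; linarith
  set f : ℝ → ℝ := fun t => max (|t| - M') 0 with hfdef
  have hfc : Continuous f := (continuous_abs.sub continuous_const).max continuous_const
  have hid : cfc (id : ℝ → ℝ) a = a := cfc_id ℝ a ha
  -- a point of the spectrum of large absolute value
  have hex : ∃ x0 ∈ spectrum ℝ a, M' < ‖x0‖ := by
    by_contra hno
    push_neg at hno
    have : ‖cfc (id : ℝ → ℝ) a‖ ≤ M' := norm_cfc_le hM'0.le (fun x hx => hno x hx)
    rw [hid] at this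
    linarith
  obtain ⟨x0, hx0mem, hx0⟩ := hex
  have hspec : ∀ t ∈ spectrum ℝ a, |t| ≤ r := by
    intro t ht
    have := norm_apply_le_norm_cfc (id : ℝ → ℝ) a ht continuous_id.continuousOn ha
    rw [hid] at this
    simpa using this
  set c : A := cfc f a with hcdef
  have hc_sa : IsSelfAdjoint c := cfc_predicate f a
  have hcne : c ≠ 0 := by
    intro hc0
    have hle := norm_apply_le_norm_cfc f a hx0mem hfc.continuousOn ha
    rw [← hcdef, hc0, norm_zero] at hle
    have : 0 < f x0 := by
      rw [hfdef]
      simp only [lt_max_iff]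
      left
      rw [Real.norm_eq_abs] at hx0
      linarith
    rw [Real.norm_eq_abs] at hle
    linarith [le_abs_self (f x0)]
  -- positivity of τ(c² )
  have hδpos : 0 < (τ (star c * c)).re := by
    apply re_pos_of_nonneg_ne _ (hpos c)
    intro h0
    exact hcne (hfaith c h0)
  set δ : ℝ := (τ (star c * c)).re with hδdef
  set C : ℝ := M' ^ (2 * 1) / (r - M') ^ 2 with hCdef -- dummy; real C depends on m below
  -- main moment estimate
  have hmain : ∀ m : ℕ, (M' ^ (2*m) / (r - M') ^ 2) * δ ≤ M ^ (2*m) := by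
    intro m
    set Cm : ℝ := M' ^ (2*m) / (r - M') ^ 2 with hCm
    set g : ℝ → ℝ := fun t => t ^ (2*m) - Cm * (f t * f t) with hgdef
    have hgnn : ∀ t ∈ spectrum ℝ a, 0 ≤ g t := by
      intro t ht
      have htr := hspec t ht
      rw [hgdef]
      simp only
      have habs : t ^ (2*m) = |t| ^ (2*m) := ((even_two_mul m).pow_abs t).symm
      by_cases hcase : |t| ≤ M'
      · have : f t = 0 := by rw [hfdef]; simp only [max_eq_right_iff]; linarith
        rw [this, habs]
        simp only [mul_zero, sub_zero]
        exact pow_nonneg (abs_nonneg t) _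
      · push_neg at hcase
        have hft : f t = |t| - M' := by rw [hfdef]; simp only [max_eq_left_iff]; linarith
        have h1 : f t * f t ≤ (r - M') ^ 2 := by
          rw [hft, sq]
          apply mul_le_mul (by linarith) (by linarith) (by linarith) (by linarith)
        have h2 : Cm * (f t * f t) ≤ M' ^ (2*m) := by
          have hrM : 0 < r - M' := by linarith
          rw [hCm, div_mul_eq_mul_div, div_le_iff₀ (pow_pos hrM 2)]
          calc M' ^ (2*m) * (f t * f t) ≤ M' ^ (2*m) * (r - M')^2 := by
                apply mul_le_mul_of_nonneg_left h1 (by positivity)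
            _ = M' ^ (2*m) * (r - M')^2 := rfl
        have h3 : M' ^ (2*m) ≤ |t| ^ (2*m) := pow_le_pow_left₀ hM'0.le hcase.le _
        rw [habs]
        linarith
    have hcfc_g : cfc g a = a ^ (2*m) - Cm • (c * c) := by
      rw [hgdef]
      rw [cfc_sub _ _ a (by fun_prop) (by fun_prop)]
      rw [cfc_pow_id a (2*m) ha]
      rw [cfc_const_mul Cm (fun t => f t * f t) a (by fun_prop)]
      rw [cfc_mul f f a hfc.continuousOn hfc.continuousOn]
    have h0 : 0 ≤ τ (cfc g a) := tau_nonneg τ hpos (cfc_nonneg hgnn)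
    rw [hcfc_g, map_sub] at h0
    have hsmul : τ (Cm • (c * c)) = (Cm : ℂ) * τ (c * c) := by
      rw [show Cm • (c * c) = (Cm : ℂ) • (c * c) by
        rw [← algebraMap_smul ℂ Cm (c*c), Complex.coe_algebraMap], LinearMap.map_smul, smul_eq_mul]
    rw [hsmul] at h0
    have hcc : c * c = star c * c := by rw [hc_sa.star_eq]
    rw [hcc] at h0
    have hre : 0 ≤ (τ (a ^ (2*m))).re - Cm * δ := by
      have := h0
      rw [Complex.le_def] at this
      simp only [Complex.zero_re, Complex.sub_re, Complex.mul_re, Complex.ofReal_re,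
        Complex.ofReal_im] at this
      have him : (τ (star c * c)).im = 0 := by
        have := hpos c
        rw [Complex.le_def] at this
        simpa using this.2.symm
      rw [him] at this
      simpa [hδdef] using this.1
    have := hmom m
    linarith
  -- contradiction
  have hratio : M / M' < 1 := (div_lt_one hM'0).mpr hMM'
  have hεpos : 0 < δ / (r - M') ^ 2 := by
    apply div_pos hδpos
    have : 0 < r - M' := by linarith
    positivity
  obtain ⟨m, hm⟩ := exists_pow_lt_of_lt_one hεpos hratio
  have key := hmain m
  have hMpow : M ^ (2*m) = (M / M') ^ (2*m) * M' ^ (2*m) := by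
    rw [div_pow, div_mul_eq_mul_div, mul_div_assoc, div_self (by positivity), mul_one]
  have hlt2 : (M / M') ^ (2*m) < δ / (r - M') ^ 2 := by
    calc (M / M') ^ (2*m) ≤ (M / M') ^ m := by
          apply pow_le_pow_of_le_one (by positivity) hratio.le
          omega
      _ < δ / (r - M') ^ 2 := hm
  have : M ^ (2*m) < M' ^ (2*m) / (r - M') ^ 2 * δ := by
    rw [hMpow]
    calc (M / M') ^ (2*m) * M' ^ (2*m) < (δ / (r - M')^2) * M' ^ (2*m) := by
          apply mul_lt_mul_of_pos_right hlt2 (by positivity)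
      _ = M' ^ (2*m) / (r - M')^2 * δ := by ring
  linarith

end CStar
end HO
namespace HO
open Polynomial Finset

def LrL : Polynomial ℝ →ₗ[ℝ] ℝ where
  toFun := Lr
  map_add' := Lr_add
  map_smul' := fun c p => by simpa using Lr_smul c p

lemma LrL_apply (p : Polynomial ℝ) : LrL p = Lr p := rfl

def sR (n : ℕ) : Polynomial ℝ := ∑ k ∈ Finset.range (n + 1), uR k

lemma gauss (n : ℕ) : (∑ k ∈ Finset.range (n + 1), ((k : ℝ) + 1))
    = ((n : ℝ) + 1) * ((n : ℝ) + 2) / 2 := by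
  induction n with
  | zero => norm_num
  | succ n ih =>
      rw [Finset.sum_range_succ, ih]
      push_cast
      ring

lemma sR_abs_le {t : ℝ} (ht : t ∈ Set.Icc (-2 : ℝ) 2) (n : ℕ) :
    |(sR n).eval t| ≤ ((n : ℝ) + 1) * ((n : ℝ) + 2) / 2 := by
  rw [sR, Polynomial.eval_finset_sum]
  calc |∑ k ∈ Finset.range (n+1), (uR k).eval t|
      ≤ ∑ k ∈ Finset.range (n+1), |(uR k).eval t| := Finset.abs_sum_le_sum_abs _ _
    _ ≤ ∑ k ∈ Finset.range (n+1), ((k : ℝ) + 1) :=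
        Finset.sum_le_sum (fun k _ => uR_abs_le ht k)
    _ = ((n : ℝ) + 1) * ((n : ℝ) + 2) / 2 := gauss n

lemma Lr_one : Lr 1 = 1 := by
  have := Lr_uR 0
  rw [if_pos rfl] at this
  simpa [uR] using this

lemma Lr_le_of_bound (P : Polynomial ℝ) {M : ℝ} (hb : ∀ t ∈ Set.Icc (-2:ℝ) 2, P.eval t ≤ M) :
    Lr P ≤ M := by
  have h2 : Lr P ≤ Lr (Polynomial.C M) := by
    unfold Lr
    have hpi : (0:ℝ) ≤ 1 / (2 * Real.pi) := by positivity
    apply mul_le_mul_of_nonneg_left _ hpi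
    apply intervalIntegral.integral_mono_on (by norm_num) (intble P) (intble (Polynomial.C M))
    intro t ht
    simp only [Polynomial.eval_C]
    have : 0 ≤ G4 t := Real.sqrt_nonneg _
    exact mul_le_mul_of_nonneg_right (hb t ht) this
  have h3 : Lr (Polynomial.C M) = M := by
    have : (Polynomial.C M : Polynomial ℝ) = M • 1 := by rw [Polynomial.smul_eq_C_mul, mul_one]
    rw [this, Lr_smul, Lr_one, mul_one]
  linarith

lemma Lr_sR_sq (n : ℕ) : Lr (sR n * sR n) = (n : ℝ) + 1 := by
  rw [sR, Finset.sum_mul_sum, ← LrL_apply, map_sum]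
  have : ∀ i ∈ Finset.range (n+1),
      LrL (∑ j ∈ Finset.range (n+1), uR i * uR j) = 1 := by
    intro i hi
    rw [map_sum]
    have : ∀ j ∈ Finset.range (n+1), LrL (uR i * uR j) = if i = j then 1 else 0 := by
      intro j _
      rw [LrL_apply, orth]
    rw [Finset.sum_congr rfl this, Finset.sum_ite_eq]
    rw [if_pos hi]
  rw [Finset.sum_congr rfl this, Finset.sum_const, Finset.card_range]
  simp

lemma T3_expand (n m : ℕ) : Lr ((sR m * sR n) * sR m)
    = ∑ i ∈ Finset.range (m+1), ∑ k ∈ Finset.range (n+1), ∑ j ∈ Finset.range (m+1),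
        Lr (uR i * uR k * uR j) := by
  have e : (sR m * sR n) * sR m
      = ∑ i ∈ Finset.range (m+1), ∑ k ∈ Finset.range (n+1), ∑ j ∈ Finset.range (m+1),
          uR i * uR k * uR j := by
    rw [sR, sR, Finset.sum_mul_sum, Finset.sum_mul]
    apply Finset.sum_congr rfl
    intro i _
    rw [Finset.sum_mul]
    apply Finset.sum_congr rfl
    intro k _
    rw [Finset.mul_sum]
  rw [e, ← LrL_apply, map_sum]
  apply Finset.sum_congr rfl
  intro i _
  rw [map_sum]
  apply Finset.sum_congr rfl
  intro k _
  rw [map_sum]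
  rfl

lemma T3_lower (n : ℕ) : (6*(n:ℝ)+1) * ((((n:ℝ))+1)*(((n:ℝ))+2)/2)
    ≤ Lr ((sR (8*n) * sR n) * sR (8*n)) := by
  set m := 8 * n with hm
  rw [T3_expand]
  rw [Finset.sum_comm]
  have step1 : ∀ k ∈ Finset.range (n+1),
      (6*(n:ℝ)+1) * ((k:ℝ)+1)
        ≤ ∑ i ∈ Finset.range (m+1), ∑ j ∈ Finset.range (m+1), Lr (uR i * uR k * uR j) := by
    intro k hk
    have hkn : k ≤ n := Nat.lt_succ_iff.mp (Finset.mem_range.mp hk)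
    -- restrict i to Icc k (m - k)
    have hsub : Finset.Icc k (m - k) ⊆ Finset.range (m+1) := by
      intro i hi
      rw [Finset.mem_Icc] at hi
      rw [Finset.mem_range]
      omega
    have inner : ∀ i ∈ Finset.Icc k (m - k),
        ((k:ℝ)+1) ≤ ∑ j ∈ Finset.range (m+1), Lr (uR i * uR k * uR j) := by
      intro i hi
      rw [Finset.mem_Icc] at hi
      set s : Finset ℕ := (Finset.range (k+1)).image (fun r => i - k + 2*r) with hs
      have hs_sub : s ⊆ Finset.range (m+1) := by
        intro j hj
        rw [hs, Finset.mem_image] at hj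
        obtain ⟨r, hr, rfl⟩ := hj
        rw [Finset.mem_range] at hr ⊢
        omega
      have hone : ∀ j ∈ s, Lr (uR i * uR k * uR j) = 1 := by
        intro j hj
        rw [hs, Finset.mem_image] at hj
        obtain ⟨r, hr, rfl⟩ := hj
        rw [Finset.mem_range] at hr
        rw [Htriple, if_pos]
        omega
      have hcard : s.card = k + 1 := by
        rw [hs, Finset.card_image_of_injOn, Finset.card_range]
        intro r₁ h₁ r₂ h₂ h
        rw [Finset.mem_coe, Finset.mem_range] at h₁ h₂
        simp only at h
        omega
      calc ((k:ℝ)+1) = ∑ j ∈ s, (1:ℝ) := by rw [Finset.sum_const, hcard]; simp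
        _ = ∑ j ∈ s, Lr (uR i * uR k * uR j) := by
            apply Finset.sum_congr rfl
            intro j hj
            rw [hone j hj]
        _ ≤ ∑ j ∈ Finset.range (m+1), Lr (uR i * uR k * uR j) := by
            apply Finset.sum_le_sum_of_subset_of_nonneg hs_sub
            intro j _ _
            exact Htriple_nonneg i k j
    have hcardIcc : (Finset.Icc k (m - k)).card = m - 2*k + 1 := by
      rw [Nat.card_Icc]
      omega
    calc (6*(n:ℝ)+1) * ((k:ℝ)+1)
        ≤ ((m - 2*k + 1 : ℕ) : ℝ) * ((k:ℝ)+1) := by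
          apply mul_le_mul_of_nonneg_right _ (by positivity)
          have : (6*n+1 : ℕ) ≤ m - 2*k + 1 := by omega
          calc (6*(n:ℝ)+1) = ((6*n+1 : ℕ) : ℝ) := by push_cast; ring
            _ ≤ ((m - 2*k + 1 : ℕ) : ℝ) := Nat.cast_le.mpr this
      _ = ∑ _i ∈ Finset.Icc k (m - k), ((k:ℝ)+1) := by
          rw [Finset.sum_const, hcardIcc, nsmul_eq_mul]
      _ ≤ ∑ i ∈ Finset.Icc k (m - k), ∑ j ∈ Finset.range (m+1), Lr (uR i * uR k * uR j) :=
          Finset.sum_le_sum inner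
      _ ≤ ∑ i ∈ Finset.range (m+1), ∑ j ∈ Finset.range (m+1), Lr (uR i * uR k * uR j) := by
          apply Finset.sum_le_sum_of_subset_of_nonneg hsub
          intro i _ _
          exact Finset.sum_nonneg (fun j _ => Htriple_nonneg i k j)
  calc (6*(n:ℝ)+1) * ((((n:ℝ))+1)*(((n:ℝ))+2)/2)
      = ∑ k ∈ Finset.range (n+1), (6*(n:ℝ)+1) * ((k:ℝ)+1) := by
        rw [← Finset.mul_sum, gauss]
    _ ≤ ∑ k ∈ Finset.range (n+1), ∑ i ∈ Finset.range (m+1), ∑ j ∈ Finset.range (m+1),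
          Lr (uR i * uR k * uR j) := Finset.sum_le_sum step1

end HO
namespace HO
open Polynomial Finset

lemma uR_map : ∀ n : ℕ, (uR n).map (algebraMap ℝ ℂ) = chebU n
  | 0 => by simp [uR, chebU]
  | 1 => by simp [uR, chebU]
  | n + 2 => by
      rw [show uR (n+2) = Polynomial.X * uR (n + 1) - uR n from rfl,
        show chebU (n+2) = Polynomial.X * chebU (n + 1) - chebU n from rfl,
        Polynomial.map_sub, Polynomial.map_mul, Polynomial.map_X, uR_map (n+1), uR_map n]

lemma chebU_monic_natDegree : ∀ n : ℕ, (chebU n).Monic ∧ (chebU n).natDegree = n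
  | 0 => ⟨monic_one, natDegree_one⟩
  | 1 => ⟨monic_X, natDegree_X⟩
  | n + 2 => by
      obtain ⟨hm, hd⟩ := chebU_monic_natDegree (n+1)
      obtain ⟨hm', hd'⟩ := chebU_monic_natDegree n
      have hXm : (Polynomial.X * chebU (n+1)).Monic := Polynomial.monic_X.mul hm
      have hXd : (Polynomial.X * chebU (n+1)).natDegree = n + 2 := by
        rw [Polynomial.natDegree_mul Polynomial.X_ne_zero hm.ne_zero,
          Polynomial.natDegree_X, hd]
        omega
      constructor
      · refine hXm.sub_of_left ?_
        rw [Polynomial.degree_eq_natDegree hm'.ne_zero,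
          Polynomial.degree_eq_natDegree hXm.ne_zero, hXd, hd']
        exact_mod_cast Nat.lt_succ_of_lt (Nat.lt_succ_self n)
      · rw [show chebU (n+2) = Polynomial.X * chebU (n + 1) - chebU n from rfl,
          Polynomial.natDegree_sub_eq_left_of_natDegree_lt (by rw [hXd, hd']; omega), hXd]

def SC (n : ℕ) : Polynomial ℂ := ∑ k ∈ Finset.range (n + 1), chebU k

lemma SC_map (n : ℕ) : (sR n).map (algebraMap ℝ ℂ) = SC n := by
  rw [sR, SC, Polynomial.map_sum]
  exact Finset.sum_congr rfl (fun k _ => uR_map k)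

lemma SC_natDegree_le (n : ℕ) : (SC n).natDegree ≤ n :=
  Polynomial.natDegree_sum_le_of_forall_le _ _ (fun k hk => by
    rw [(chebU_monic_natDegree k).2]
    exact Nat.lt_succ_iff.mp (Finset.mem_range.mp hk))

lemma SC_coeff (n : ℕ) : (SC n).coeff n = 1 := by
  rw [SC, Polynomial.finset_sum_coeff, Finset.sum_eq_single n]
  · have h := chebU_monic_natDegree n
    have := h.1.coeff_natDegree
    rwa [h.2] at this
  · intro k hk hne
    apply Polynomial.coeff_eq_zero_of_natDegree_lt
    rw [(chebU_monic_natDegree k).2]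
    have := Finset.mem_range.mp hk
    omega
  · intro h
    exact absurd (Finset.self_mem_range_succ n) h

lemma semicircle_Lr (k : ℕ) : Lr (Polynomial.X ^ k) = semicircleMoment k := by
  unfold Lr semicircleMoment G4
  congr 1
  apply intervalIntegral.integral_congr
  intro t _
  simp

end HO

open HO
open scoped ComplexOrder

end

open HO
open scoped ComplexOrder

/-- Optimality of the non-homogeneous Haagerup inequality: there are polynomials
`Q n` of degree `n` with
`liminf ‖Q_n(x)‖ / (√((1/3)(n+1)(n+3/2)(n+2)) ‖Q_n(x)‖₂) ≥ √(3/8)`. -/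
theorem haagerup_optimal {d : ℕ} (hd : 0 < d) {A : Type*} [NormedRing A] [StarRing A]
    [CStarRing A] [CompleteSpace A] [NormedAlgebra ℂ A] [StarModule ℂ A]
    (τ : A →ₗ[ℂ] ℂ) (x : Fin d → A)
    (hτ : IsFaithfulTracialState τ) (hx : IsFreeSemicircular τ x) :
    ∃ Q : ℕ → FreeAlgebra ℂ (Fin d),
      (∀ n : ℕ, 1 ≤ n → Q n ∈ degLE d n ∧ Q n ∉ degLE d (n - 1)) ∧
      Real.sqrt (3 / 8) ≤
        Filter.liminf (fun n : ℕ =>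
          ‖FreeAlgebra.lift ℂ x (Q n)‖ /
            (Real.sqrt ((1 / 3) * ((n : ℝ) + 1) * ((n : ℝ) + 3 / 2) * ((n : ℝ) + 2)) *
              l2norm τ (FreeAlgebra.lift ℂ x (Q n)))) Filter.atTop := by
  obtain ⟨htr1, hpos, hfaith, htrace⟩ := hτ
  obtain ⟨hsa, hmom, -⟩ := hx
  set i0 : Fin d := ⟨0, hd⟩ with hi0
  set y : A := x i0 with hy
  -- bridge between τ and the semicircle integral functional Lr
  have tau_poly : ∀ P : Polynomial ℝ,
      τ (Polynomial.aeval y (P.map (algebraMap ℝ ℂ))) = ((Lr P : ℝ) : ℂ) := by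
    intro P
    induction P using Polynomial.induction_on' with
    | add p q hp hq =>
        rw [Polynomial.map_add, map_add, map_add, hp, hq, Lr_add, Complex.ofReal_add]
    | monomial k c =>
        rw [Polynomial.map_monomial, Polynomial.aeval_monomial, ← Algebra.smul_def,
          LinearMap.map_smul, smul_eq_mul, hmom i0 k, ← Polynomial.smul_X_eq_monomial, Lr_smul,
          semicircle_Lr]
        rw [Complex.coe_algebraMap]
        push_cast
        ring
  -- selfadjointness of real polynomials in y
  have star_poly : ∀ P : Polynomial ℝ,
      star (Polynomial.aeval y (P.map (algebraMap ℝ ℂ))) =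
        Polynomial.aeval y (P.map (algebraMap ℝ ℂ)) := by
    intro P
    induction P using Polynomial.induction_on' with
    | add p q hp hq => rw [Polynomial.map_add, map_add, star_add, hp, hq]
    | monomial k c =>
        rw [Polynomial.map_monomial, Polynomial.aeval_monomial, star_mul, star_pow, hsa i0,
          ← algebraMap_star_comm]
        rw [show star ((algebraMap ℝ ℂ) c) = (algebraMap ℝ ℂ) c by
          simp [Complex.star_def, Complex.conj_ofReal]]
        rw [← Algebra.commutes]
  -- the elements
  set An : ℕ → A := fun n => Polynomial.aeval y ((sR n).map (algebraMap ℝ ℂ)) with hAn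
  set Qf : ℕ → FreeAlgebra ℂ (Fin d) :=
    fun n => Polynomial.aeval (FreeAlgebra.ι ℂ i0) ((sR n).map (algebraMap ℝ ℂ)) with hQf
  have hliftQ : ∀ n, FreeAlgebra.lift ℂ x (Qf n) = An n := by
    intro n
    rw [hQf, hAn]
    simp only
    rw [← Polynomial.aeval_algHom_apply, FreeAlgebra.lift_ι_apply]
  have hA_star : ∀ n, star (An n) = An n := fun n => star_poly (sR n)
  have hA_sa : ∀ n, IsSelfAdjoint (An n) := fun n => hA_star n
  -- membership
  have hdegQ : ∀ n, Qf n ∈ degLE d n := by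
    intro n
    have hdeg : ((sR n).map (algebraMap ℝ ℂ)).natDegree ≤ n := by
      rw [SC_map]; exact SC_natDegree_le n
    rw [hQf]
    simp only
    rw [Polynomial.as_sum_range' _ (n+1) (Nat.lt_succ_of_le hdeg), map_sum]
    apply Submodule.sum_mem
    intro k hk
    rw [Polynomial.aeval_monomial, ← Algebra.smul_def]
    apply Submodule.smul_mem
    apply Submodule.subset_span
    refine ⟨List.replicate k i0, by
      rw [List.length_replicate]
      exact Nat.lt_succ_iff.mp (Finset.mem_range.mp hk), ?_⟩
    rw [List.map_replicate, List.prod_replicate]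
  have hnotQ : ∀ n, 1 ≤ n → Qf n ∉ degLE d (n - 1) := by
    intro n hn hmem
    set ev1 : FreeAlgebra ℂ (Fin d) →ₐ[ℂ] Polynomial ℂ :=
      FreeAlgebra.lift ℂ (fun _ => (Polynomial.X : Polynomial ℂ)) with hev1
    have hev1Q : ev1 (Qf n) = SC n := by
      rw [hQf]
      simp only
      rw [← Polynomial.aeval_algHom_apply, FreeAlgebra.lift_ι_apply,
        Polynomial.aeval_X_left_apply, SC_map]
    have hbound : ∀ w ∈ degLE d (n-1), (ev1 w).natDegree ≤ n - 1 := by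
      intro w hw
      induction hw using Submodule.span_induction with
      | mem w hw =>
          obtain ⟨I, hI, rfl⟩ := hw
          rw [map_list_prod, List.map_map]
          have : (ev1 ∘ FreeAlgebra.ι ℂ) = fun _ : Fin d => (Polynomial.X : Polynomial ℂ) := by
            funext i
            simp [hev1, FreeAlgebra.lift_ι_apply]
          rw [this, List.map_const', List.prod_replicate, Polynomial.natDegree_X_pow]
          exact hI
      | zero => simp
      | add u v _ _ hu hv =>
          rw [map_add]
          exact (Polynomial.natDegree_add_le _ _).trans (by omega)
      | smul c u _ hu =>
          rw [_root_.map_smul]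
          exact (Polynomial.natDegree_smul_le _ _).trans hu
    have h1 := hbound _ hmem
    rw [hev1Q] at h1
    have h2 : n ≤ (SC n).natDegree :=
      Polynomial.le_natDegree_of_ne_zero (by rw [SC_coeff]; exact one_ne_zero)
    omega
  -- trace of products
  have tau_mul2 : ∀ a b : ℕ, τ (An a * An b) = ((Lr (sR a * sR b) : ℝ) : ℂ) := by
    intro a b
    rw [hAn]
    simp only
    rw [← map_mul, ← Polynomial.map_mul, tau_poly]
  have tau_mul3 : ∀ a b c : ℕ, τ (An a * An b * An c) = ((Lr (sR a * sR b * sR c) : ℝ) : ℂ) := by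
    intro a b c
    rw [hAn]
    simp only
    rw [← map_mul, ← map_mul, ← Polynomial.map_mul, ← Polynomial.map_mul, tau_poly]
  -- the L² norm
  have hl2 : ∀ n, l2norm τ (An n) = Real.sqrt ((n:ℝ) + 1) := by
    intro n
    unfold l2norm
    rw [hA_star n, tau_mul2 n n, Lr_sR_sq, Complex.ofReal_re]
  -- norm upper bound
  have hnormup : ∀ n : ℕ, ‖An n‖ ≤ ((n:ℝ)+1) * ((n:ℝ)+2) / 2 := by
    intro n
    apply norm_le_of_moments τ hpos hfaith (hA_sa n) (by positivity)
    intro m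
    have hp : (An n) ^ (2*m) = Polynomial.aeval y (((sR n)^(2*m)).map (algebraMap ℝ ℂ)) := by
      rw [hAn]
      simp only
      rw [Polynomial.map_pow, map_pow]
    rw [hp, tau_poly, Complex.ofReal_re]
    apply Lr_le_of_bound
    intro t ht
    have h1 : |(sR n).eval t| ≤ ((n:ℝ)+1) * ((n:ℝ)+2) / 2 := sR_abs_le ht n
    calc ((sR n)^(2*m)).eval t = ((sR n).eval t)^(2*m) := by rw [Polynomial.eval_pow]
      _ = |(sR n).eval t|^(2*m) := ((even_two_mul m).pow_abs _).symm
      _ ≤ (((n:ℝ)+1) * ((n:ℝ)+2) / 2)^(2*m) := pow_le_pow_left₀ (abs_nonneg _) h1 _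
  -- norm lower bound
  have hnormlow : ∀ n : ℕ,
      (6*(n:ℝ)+1) * (((n:ℝ)+1)*((n:ℝ)+2)/2) / (8*(n:ℝ)+1) ≤ ‖An n‖ := by
    intro n
    letI : CStarAlgebra A := { }
    letI := CStarAlgebra.spectralOrder A
    haveI := CStarAlgebra.spectralOrderedRing A
    set m : ℕ := 8 * n with hm
    set B : A := An m with hB
    set r : ℝ := ‖An n‖ with hr
    have key : (0:A) ≤ star B * ((algebraMap ℝ A r) - An n) * B :=
      star_left_conjugate_nonneg (sub_nonneg.mpr (IsSelfAdjoint.le_algebraMap_norm_self (hA_sa n))) B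
    have h0 := tau_nonneg τ hpos key
    have hsplit : star B * ((algebraMap ℝ A r) - An n) * B
        = B * (algebraMap ℝ A r) * B - B * An n * B := by
      rw [hA_star m]
      noncomm_ring
    have hBrB : B * (algebraMap ℝ A r) * B = r • (B * B) := by
      rw [← Algebra.commutes r B, mul_assoc, ← Algebra.smul_def]
    have hsmul : τ (r • (B * B)) = (r : ℂ) * τ (B * B) := by
      rw [show r • (B * B) = (r : ℂ) • (B * B) by
        rw [← algebraMap_smul ℂ r (B * B), Complex.coe_algebraMap], LinearMap.map_smul,
        smul_eq_mul]
    rw [hsplit, map_sub, hBrB, hsmul, tau_mul2 m m, tau_mul3 m n m, Lr_sR_sq] at h0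
    have hT3 := T3_lower n
    have hreal : ((r:ℂ) * (((m:ℝ)+1 : ℝ) : ℂ) - ((Lr (sR m * sR n * sR m) : ℝ) : ℂ))
        = (((r * ((m:ℝ)+1) - Lr (sR m * sR n * sR m) : ℝ)) : ℂ) := by
      push_cast
      ring
    rw [hreal, Complex.zero_le_real] at h0
    have hmr : ((m:ℝ)) = 8 * (n:ℝ) := by rw [hm]; push_cast; ring
    rw [div_le_iff₀ (by positivity)]
    calc (6*(n:ℝ)+1) * (((n:ℝ)+1)*((n:ℝ)+2)/2) ≤ Lr (sR m * sR n * sR m) := by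
          rw [hm]; exact hT3
      _ ≤ r * ((m:ℝ)+1) := by linarith
      _ = r * (8*(n:ℝ)+1) := by rw [hmr]
  -- assembling the liminf bound
  refine ⟨Qf, fun n hn => ⟨hdegQ n, hnotQ n hn⟩, ?_⟩
  have hDpos : ∀ n : ℕ, 0 < Real.sqrt ((1 / 3) * ((n : ℝ) + 1) * ((n : ℝ) + 3 / 2) *
      ((n : ℝ) + 2)) * Real.sqrt ((n:ℝ) + 1) := by
    intro n
    have h1 : (0:ℝ) < (1 / 3) * ((n : ℝ) + 1) * ((n : ℝ) + 3 / 2) * ((n : ℝ) + 2) := by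
      positivity
    have h2 : (0:ℝ) < (n:ℝ) + 1 := by positivity
    exact mul_pos (Real.sqrt_pos.mpr h1) (Real.sqrt_pos.mpr h2)
  have hfe : ∀ n : ℕ, ‖FreeAlgebra.lift ℂ x (Qf n)‖ /
      (Real.sqrt ((1 / 3) * ((n : ℝ) + 1) * ((n : ℝ) + 3 / 2) * ((n : ℝ) + 2)) *
        l2norm τ (FreeAlgebra.lift ℂ x (Qf n)))
      = ‖An n‖ / (Real.sqrt ((1 / 3) * ((n : ℝ) + 1) * ((n : ℝ) + 3 / 2) * ((n : ℝ) + 2)) *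
        Real.sqrt ((n:ℝ) + 1)) := by
    intro n
    rw [hliftQ n, hl2 n]
  -- the two sqrt comparison facts
  have hcompare_up : ∀ n : ℕ, ((n:ℝ)+1) * ((n:ℝ)+2) / 2
      ≤ Real.sqrt ((1 / 3) * ((n : ℝ) + 1) * ((n : ℝ) + 3 / 2) * ((n : ℝ) + 2)) *
        Real.sqrt ((n:ℝ) + 1) := by
    intro n
    rw [← Real.sqrt_mul (by positivity)]
    rw [show ((n:ℝ)+1) * ((n:ℝ)+2) / 2
        = Real.sqrt ((((n:ℝ)+1) * ((n:ℝ)+2) / 2)^2) from (Real.sqrt_sq (by positivity)).symm]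
    apply Real.sqrt_le_sqrt
    nlinarith [Nat.cast_nonneg (α := ℝ) n]
  have hcompare_low : ∀ n : ℕ, 1 ≤ n →
      Real.sqrt (3/8) * (Real.sqrt ((1 / 3) * ((n : ℝ) + 1) * ((n : ℝ) + 3 / 2) *
        ((n : ℝ) + 2)) * Real.sqrt ((n:ℝ) + 1))
      ≤ (6*(n:ℝ)+1) * (((n:ℝ)+1)*((n:ℝ)+2)/2) / (8*(n:ℝ)+1) := by
    intro n hn
    rw [← Real.sqrt_mul (by positivity), ← Real.sqrt_mul (by norm_num : (0:ℝ) ≤ 3/8)]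
    rw [show (6*(n:ℝ)+1) * (((n:ℝ)+1)*((n:ℝ)+2)/2) / (8*(n:ℝ)+1)
        = Real.sqrt (((6*(n:ℝ)+1) * (((n:ℝ)+1)*((n:ℝ)+2)/2) / (8*(n:ℝ)+1))^2) from
        (Real.sqrt_sq (by positivity)).symm]
    apply Real.sqrt_le_sqrt
    rw [div_pow, le_div_iff₀ (by positivity)]
    have hN : (0:ℝ) ≤ (n:ℝ) := Nat.cast_nonneg n
    nlinarith [mul_nonneg (mul_nonneg (sq_nonneg ((n:ℝ)+1)) (by linarith : (0:ℝ) ≤ (n:ℝ)+2))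
      (by nlinarith : (0:ℝ) ≤ 16*(n:ℝ)^3+112*(n:ℝ)^2+50*(n:ℝ)+5)]
  apply Filter.le_liminf_of_le
  · apply Filter.IsCoboundedUnder.of_frequently_le (a := 1)
    apply Filter.Eventually.frequently
    apply Filter.Eventually.of_forall
    intro n
    rw [hfe n]
    rw [div_le_one (hDpos n)]
    exact (hnormup n).trans (hcompare_up n)
  · filter_upwards [Filter.eventually_ge_atTop 1] with n hn
    rw [hfe n]
    rw [le_div_iff₀ (hDpos n)]
    calc Real.sqrt (3/8) * (Real.sqrt ((1 / 3) * ((n : ℝ) + 1) * ((n : ℝ) + 3 / 2) *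
          ((n : ℝ) + 2)) * Real.sqrt ((n:ℝ) + 1))
        ≤ (6*(n:ℝ)+1) * (((n:ℝ)+1)*((n:ℝ)+2)/2) / (8*(n:ℝ)+1) := hcompare_low n hn
      _ ≤ ‖An n‖ := hnormlow n
end

section
/- For every noncommutative polynomial Q ∈ ℂ⟨X_1,…,X_d⟩ and all indices i_1,…,i_n ∈ {1,…,d}, one has τ(P_{i_n,…,i_1}(x) · Q(x)) = Φ(∂_{i_1,…,i_n} Q), where Φ : ℂ⟨X_1,…,X_d⟩^{⊗(n+1)} → ℂ is the linear map determined by Φ(A_1 ⊗ ⋯ ⊗ A_{n+1}) = τ(A_1(x))·τ(A_2(x))⋯τ(A_{n+1}(x)). -/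
open scoped ComplexOrder TensorProduct

noncomputable section

/-- Given a trace functional `tb = τ ∘ ev` on the free algebra and the noncommutative
derivatives `D i`, `PhiD tb D [i_1, …, i_n]` is the functional
`Q ↦ Φ(∂_{i_1,…,i_n} Q)`, where `Φ = tb ⊗ ⋯ ⊗ tb` : it peels off the factorization
at `X_{i_1}` first, applying `tb` to the left factor. -/
def PhiD {d : ℕ} (tb : FreeAlgebra ℂ (Fin d) →ₗ[ℂ] ℂ)
    (D : Fin d → (FreeAlgebra ℂ (Fin d) →ₗ[ℂ]
      FreeAlgebra ℂ (Fin d) ⊗[ℂ] FreeAlgebra ℂ (Fin d))) :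
    List (Fin d) → (FreeAlgebra ℂ (Fin d) →ₗ[ℂ] ℂ)
  | [] => tb
  | i :: r => LinearMap.mul' ℂ ℂ ∘ₗ TensorProduct.map tb (PhiD tb D r) ∘ₗ D i

end


noncomputable section AuxProofs

open Real intervalIntegral

lemma chebU_X_mul (m : ℕ) : Polynomial.X * chebU (m+1) = chebU (m+2) + chebU m := by
  rw [chebU]; ring

lemma chebU_succ_mul_succ : ∀ a b, chebU (a+1) * chebU (b+1) = chebU a * chebU b + chebU (a+b+2) := by
  intro a
  induction a with
  | zero =>
    intro b
    have : Polynomial.X * chebU (b+1) = chebU 0 * chebU b + chebU (b+2) := by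
      rw [chebU_X_mul]; simp [chebU]
    simpa [show chebU 1 = Polynomial.X from rfl] using this
  | succ a IH =>
    intro b
    have h1 : chebU (a+2) = Polynomial.X * chebU (a+1) - chebU a := by rw [chebU]
    rcases b with _ | b'
    · show chebU (a+2) * chebU 1 = chebU (a+1) * chebU 0 + chebU (a+3)
      have h3 : chebU (a+3) = Polynomial.X * chebU (a+2) - chebU (a+1) := by rw [chebU]
      simp only [chebU, h3]
      ring
    · have key := IH b'
      have key2 := IH (b'+1)
      have h2 : chebU (b'+2) = Polynomial.X * chebU (b'+1) - chebU b' := by rw [chebU]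
      have h4 : chebU (a+1+(b'+1)+2) = Polynomial.X * chebU (a+b'+1+2) - chebU (a+b'+2) := by
        have : a+1+(b'+1)+2 = (a+b'+2)+2 := by ring
        rw [this, chebU]
      calc chebU (a+1+1) * chebU (b'+1+1)
          = (Polynomial.X * chebU (a+1) - chebU a) * chebU (b'+2) := by rw [h1]
        _ = Polynomial.X * (chebU (a+1) * chebU (b'+2)) - chebU a * chebU (b'+2) := by ring
        _ = Polynomial.X * (chebU a * chebU (b'+1) + chebU (a+b'+3)) - chebU a * chebU (b'+2) := by rw [key2]; ring_nf
        _ = chebU a * (Polynomial.X * chebU (b'+1) - chebU (b'+2)) + Polynomial.X * chebU (a+b'+3) := by ring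
        _ = chebU a * chebU b' + Polynomial.X * chebU (a+b'+3) := by rw [h2]; ring
        _ = chebU (a+1) * chebU (b'+1) - chebU (a+b'+2) + Polynomial.X * chebU (a+b'+2+1) := by rw [key]; ring_nf
        _ = chebU (a+1) * chebU (b'+1) + chebU (a+1+(b'+1)+2) := by rw [chebU_X_mul]; ring_nf

lemma chebU_mul : ∀ a b, chebU a * chebU b =
    ∑ r ∈ Finset.range (min a b + 1), chebU (a + b - 2*r) := by
  intro a
  induction a with
  | zero => intro b; simp [chebU, one_mul]
  | succ a IH =>
    intro b
    rcases b with _ | b'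
    · simp [chebU, mul_one]
    · rw [chebU_succ_mul_succ, IH b']
      have hmin : min (a+1) (b'+1) = min a b' + 1 := by omega
      rw [hmin]
      conv_rhs => rw [Finset.sum_range_succ', Finset.sum_range_succ']
      have e0 : a + 1 + (b' + 1) - 2*0 = a + b' + 2 := by omega
      have e1 : ∀ k, a + 1 + (b' + 1) - 2*(k+1+1) = a + b' - 2*(k+1) := by intro k; omega
      have e2 : a + 1 + (b' + 1) - 2*(0+1) = a + b' - 2*0 := by omega
      rw [e0, e2]
      congr 1
      conv_lhs => rw [Finset.sum_range_succ']
      congr 1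
      apply Finset.sum_congr rfl
      intro r _
      rw [e1]


lemma chebU_eval_cos : ∀ (k : ℕ) (θ : ℝ),
    (chebU k).eval ((2 * Real.cos θ : ℝ) : ℂ) * (Real.sin θ : ℂ)
      = ((Real.sin ((k+1) * θ) : ℝ) : ℂ) := by
  intro k
  induction k using Nat.twoStepInduction with
  | zero => intro θ; simp [chebU]
  | one =>
    intro θ
    simp only [chebU, Polynomial.eval_X]
    push_cast
    rw [show ((1:ℂ)+1)*(θ:ℂ) = 2*θ by ring, Complex.sin_two_mul]
    ring
  | more k IH1 IH2 =>
    intro θ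
    have key : Real.sin ((k+2+1) * θ) =
        2 * Real.cos θ * Real.sin ((k+1+1) * θ) - Real.sin ((k+1) * θ) := by
      have h1 := Real.sin_add ((k+2)*θ) θ
      have h2 := Real.sin_sub ((k+2)*θ) θ
      have e1 : ((k:ℝ)+2+1)*θ = (k+2)*θ + θ := by ring
      have e2 : ((k:ℝ)+1)*θ = (k+2)*θ - θ := by ring
      have e3 : ((k:ℝ)+1+1)*θ = (k+2)*θ := by ring
      rw [e1, e2, e3, h1, h2]
      ring
    have hk2 : chebU (k+2) = Polynomial.X * chebU (k+1) - chebU k := by rw [chebU]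
    have c1 := IH2 θ  -- for k+1
    have c2 := IH1 θ  -- for k
    have keyC : Complex.sin ((k+2+1) * θ) =
        2 * Complex.cos θ * Complex.sin ((k+1+1) * θ) - Complex.sin ((k+1) * θ) := by
      exact_mod_cast congrArg (Complex.ofReal) key
    push_cast at c1 c2 ⊢
    rw [hk2]
    simp only [Polynomial.eval_sub, Polynomial.eval_mul, Polynomial.eval_X]
    linear_combination (2*Complex.cos (θ:ℂ)) * c1 - c2 - keyC

lemma integral_cos_nat (n : ℕ) :
    ∫ θ in (0:ℝ)..Real.pi, Real.cos (n * θ) = if n = 0 then Real.pi else 0 := by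
  rcases Nat.eq_zero_or_pos n with h | h
  · simp [h]
  · rw [if_neg (by omega)]
    have hne : (n:ℝ) ≠ 0 := by positivity
    have := intervalIntegral.smul_integral_comp_mul_left (fun x => Real.cos x) (c := (n:ℝ)) (a := 0) (b := Real.pi)
    rw [integral_cos] at this
    have h2 : ∫ θ in (0:ℝ)..Real.pi, Real.cos (n * θ)
        = (n:ℝ)⁻¹ • ((n:ℝ) • ∫ θ in (0:ℝ)..Real.pi, Real.cos (n * θ)) := by
      rw [smul_smul, inv_mul_cancel₀ hne, one_smul]
    rw [h2, this]
    simp [Real.sin_nat_mul_pi]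


lemma semicircle_integral_chebU (k : ℕ) :
    (1/(2*Real.pi) : ℂ) * ∫ t in (-2:ℝ)..2, (chebU k).eval (t:ℂ) * ((Real.sqrt (4 - t^2) : ℝ) : ℂ)
      = if k = 0 then 1 else 0 := by
  set g : ℝ → ℂ := fun t => (chebU k).eval (t:ℂ) * ((Real.sqrt (4 - t^2) : ℝ) : ℂ) with hg
  have hgc : Continuous g := by
    apply Continuous.mul
    · exact ((chebU k).continuous).comp Complex.continuous_ofReal
    · exact Complex.continuous_ofReal.comp (Real.continuous_sqrt.comp (by continuity))
  have hder : ∀ θ ∈ Set.uIcc (0:ℝ) Real.pi,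
      HasDerivAt (fun θ : ℝ => 2 * Real.cos θ) (-(2*Real.sin θ)) θ := by
    intro θ _
    have := (Real.hasDerivAt_cos θ).const_mul (2:ℝ)
    convert this using 1
    exacts [rfl, rfl, by ring]
  have hsub := intervalIntegral.integral_comp_smul_deriv hder
    ((by continuity : Continuous fun θ : ℝ => -(2*Real.sin θ)).continuousOn) hgc
  have hcos0 : 2 * Real.cos 0 = 2 := by simp
  have hcospi : 2 * Real.cos Real.pi = -2 := by simp
  rw [hcos0, hcospi] at hsub
  have hswap : ∫ t in (-2:ℝ)..2, g t = ∫ θ in (0:ℝ)..Real.pi, (2*Real.sin θ) • g (2*Real.cos θ) := by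
    have h1 : ∫ θ in (0:ℝ)..Real.pi, (-(2*Real.sin θ)) • g (2*Real.cos θ)
        = - ∫ θ in (0:ℝ)..Real.pi, (2*Real.sin θ) • g (2*Real.cos θ) := by
      rw [← intervalIntegral.integral_neg]
      congr 1; funext θ; rw [neg_smul]
    rw [intervalIntegral.integral_symm 2 (-2), ← hsub]
    simp only [Function.comp]
    rw [h1, neg_neg]
  have heq : Set.EqOn (fun θ => (2*Real.sin θ) • g (2*Real.cos θ))
      (fun θ => ((2*(Real.cos (k*θ) - Real.cos ((k+2)*θ)) : ℝ) : ℂ)) (Set.uIcc 0 Real.pi) := by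
    intro θ hθ
    rw [Set.uIcc_of_le Real.pi_nonneg] at hθ
    have hs : 0 ≤ Real.sin θ := Real.sin_nonneg_of_nonneg_of_le_pi hθ.1 hθ.2
    have hsq : 4 - (2*Real.cos θ)^2 = (2*Real.sin θ)^2 := by
      nlinarith [Real.sin_sq_add_cos_sq θ]
    have hsqrt : Real.sqrt (4 - (2*Real.cos θ)^2) = 2*Real.sin θ := by
      rw [hsq, Real.sqrt_sq (by positivity)]
    have htrig : Real.cos (k*θ) - Real.cos ((k+2)*θ) = 2 * Real.sin ((k+1)*θ) * Real.sin θ := by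
      rw [show (k:ℝ)*θ = (k+1)*θ - θ by ring, show ((k:ℝ)+2)*θ = (k+1)*θ + θ by ring,
        Real.cos_sub, Real.cos_add]
      ring
    have hc := chebU_eval_cos k θ
    simp only [hg]
    rw [hsqrt]
    have hsmul : (2*Real.sin θ) • ((chebU k).eval ((2*Real.cos θ : ℝ):ℂ) * ((2*Real.sin θ : ℝ):ℂ))
        = ((2*Real.sin θ : ℝ):ℂ) * ((chebU k).eval ((2*Real.cos θ : ℝ):ℂ) * ((2*Real.sin θ : ℝ):ℂ)) := by
      rw [Complex.real_smul]
    show (2*Real.sin θ) • ((chebU k).eval ((2*Real.cos θ : ℝ):ℂ) * ((2*Real.sin θ : ℝ):ℂ)) = _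
    rw [hsmul, htrig]
    simp only [Complex.ofReal_mul, Complex.ofReal_ofNat] at hc ⊢
    linear_combination (4*((Real.sin θ : ℝ):ℂ)) * hc
  rw [hswap, intervalIntegral.integral_congr heq]
  have : (∫ θ in (0:ℝ)..Real.pi, ((2*(Real.cos (k*θ) - Real.cos ((k+2)*θ)) : ℝ) : ℂ))
      = (((∫ θ in (0:ℝ)..Real.pi, 2*(Real.cos (k*θ) - Real.cos ((k+2)*θ))) : ℝ) : ℂ) := by
    exact intervalIntegral.integral_ofReal
  rw [this]
  have hA : IntervalIntegrable (fun θ : ℝ => Real.cos ((k:ℝ)*θ)) MeasureTheory.volume 0 Real.pi :=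
    (Real.continuous_cos.comp (continuous_const.mul continuous_id)).intervalIntegrable _ _
  have hB : IntervalIntegrable (fun θ : ℝ => Real.cos (((k:ℝ)+2)*θ)) MeasureTheory.volume 0 Real.pi :=
    (Real.continuous_cos.comp (continuous_const.mul continuous_id)).intervalIntegrable _ _
  have h3 : (∫ θ in (0:ℝ)..Real.pi, Real.cos (((k:ℝ)+2)*θ)) = 0 := by
    have h3' := integral_cos_nat (k+2)
    rw [if_neg (by omega)] at h3'
    push_cast at h3'
    exact h3'
  have hval : (∫ θ in (0:ℝ)..Real.pi, 2*(Real.cos (k*θ) - Real.cos ((k+2)*θ)))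
      = if k = 0 then 2*Real.pi else 0 := by
    rw [intervalIntegral.integral_const_mul, intervalIntegral.integral_sub hA hB]
    rw [integral_cos_nat k, h3]
    split_ifs <;> ring
  rw [hval]
  have hpi : (Real.pi:ℂ) ≠ 0 := by exact_mod_cast Real.pi_ne_zero
  split_ifs with h
  · push_cast
    field_simp
  · simp


lemma semicircleMoment_comb (k : ℕ) :
    ∑ i ∈ Finset.range ((chebU k).natDegree + 1),
      (chebU k).coeff i * ((semicircleMoment i : ℝ) : ℂ) = if k = 0 then 1 else 0 := by
  have hsq : Continuous fun t : ℝ => ((Real.sqrt (4 - t^2) : ℝ) : ℂ) :=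
    Complex.continuous_ofReal.comp (Real.continuous_sqrt.comp (by continuity))
  have hint : ∀ i : ℕ, IntervalIntegrable
      (fun t : ℝ => (chebU k).coeff i * ((t:ℂ)^i * ((Real.sqrt (4 - t^2) : ℝ) : ℂ)))
      MeasureTheory.volume (-2) 2 := by
    intro i
    apply Continuous.intervalIntegrable
    exact continuous_const.mul (((Complex.continuous_ofReal.pow i)).mul hsq)
  have step1 : ∀ i : ℕ, (chebU k).coeff i * ((semicircleMoment i : ℝ) : ℂ)
      = (1/(2*Real.pi) : ℂ) * ∫ t in (-2:ℝ)..2,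
          (chebU k).coeff i * ((t:ℂ)^i * ((Real.sqrt (4 - t^2) : ℝ) : ℂ)) := by
    intro i
    rw [intervalIntegral.integral_const_mul]
    rw [semicircleMoment]
    push_cast
    rw [← intervalIntegral.integral_ofReal (f := fun t => t^i * Real.sqrt (4 - t^2))]
    push_cast
    ring
  simp only [step1]
  rw [← Finset.mul_sum, ← intervalIntegral.integral_finset_sum (fun i _ => hint i)]
  have : ∀ t : ℝ, ∑ i ∈ Finset.range ((chebU k).natDegree + 1),
      (chebU k).coeff i * ((t:ℂ)^i * ((Real.sqrt (4 - t^2) : ℝ) : ℂ))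
      = (chebU k).eval (t:ℂ) * ((Real.sqrt (4 - t^2) : ℝ) : ℂ) := by
    intro t
    rw [Polynomial.eval_eq_sum_range, Finset.sum_mul]
    apply Finset.sum_congr rfl
    intro i _
    ring
  rw [intervalIntegral.integral_congr (fun t _ => this t)]
  exact semicircle_integral_chebU k

section Mom
variable {A : Type*} [Ring A] [Algebra ℂ A] (τ : A →ₗ[ℂ] ℂ)

lemma moment_chebU (y : A) (hy : ∀ k, τ (y ^ k) = (semicircleMoment k : ℂ)) (k : ℕ) :
    τ (Polynomial.aeval y (chebU k)) = if k = 0 then 1 else 0 := by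
  rw [Polynomial.aeval_eq_sum_range, map_sum]
  rw [← semicircleMoment_comb k]
  apply Finset.sum_congr rfl
  intro i _
  rw [map_smul, hy i]
  simp [smul_eq_mul]

end Mom

-- blocks machinery
variable {d : ℕ}

def blocks : List (Fin d) → List (Fin d × ℕ)
  | [] => []
  | [i] => [(i, 1)]
  | i :: j :: t =>
    if i = j then
      match blocks (j :: t) with
      | [] => [(i, 1)]
      | (a, k) :: r => (a, k + 1) :: r
    else (i, 1) :: blocks (j :: t)

def unblocks (w : List (Fin d × ℕ)) : List (Fin d) :=
  (w.map fun p => List.replicate p.2 p.1).flatten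

def AltW (w : List (Fin d × ℕ)) : Prop :=
  w.Chain' (fun p q => p.1 ≠ q.1) ∧ ∀ p ∈ w, 1 ≤ p.2

lemma blocks_cons_head : ∀ (t : List (Fin d)) (j : Fin d),
    ∃ k r, blocks (j :: t) = (j, k + 1) :: r := by
  intro t
  induction t with
  | nil => intro j; exact ⟨0, [], rfl⟩
  | cons j₂ t' IH =>
    intro j
    obtain ⟨k, r, hk⟩ := IH j₂
    by_cases h : j = j₂
    · refine ⟨k + 1, r, ?_⟩
      subst h
      rw [blocks, if_pos rfl, hk]
    · exact ⟨0, blocks (j₂ :: t'), by rw [blocks, if_neg h]⟩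

lemma blocks_tail {t : List (Fin d)} {j : Fin d} {k : ℕ} {r : List (Fin d × ℕ)}
    (h : blocks (j :: t) = (j, k) :: r) :
    blocks t = if k = 1 then r else (j, k - 1) :: r := by
  match t with
  | [] =>
    rw [show blocks [j] = [(j,1)] from rfl] at h
    simp only [List.cons.injEq, Prod.mk.injEq] at h
    obtain ⟨⟨-, hk1⟩, hr⟩ := h
    subst hr
    rw [if_pos hk1.symm]
    rfl
  | j₂ :: t' =>
    obtain ⟨k', r', hk'⟩ := blocks_cons_head t' j₂
    by_cases hj : j = j₂
    · subst hj
      rw [blocks, if_pos rfl, hk'] at h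
      simp only [List.cons.injEq, Prod.mk.injEq] at h
      obtain ⟨⟨-, h3⟩, h2⟩ := h
      rw [if_neg (by omega), hk', ← h2]
      congr 2
      omega
    · rw [blocks, if_neg hj] at h
      simp only [List.cons.injEq, Prod.mk.injEq] at h
      obtain ⟨⟨-, h3⟩, h2⟩ := h
      rw [if_pos (by omega), ← h2]

lemma unblocks_cons (p : Fin d × ℕ) (w : List (Fin d × ℕ)) :
    unblocks (p :: w) = List.replicate p.2 p.1 ++ unblocks w := rfl

lemma unblocks_blocks : ∀ L : List (Fin d), unblocks (blocks L) = L := by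
  intro L
  induction L using cheb.induct with
  | case1 => rfl
  | case2 i => rfl
  | case3 i j t IH1 IH2 =>
    by_cases h : i = j
    · obtain ⟨k, r, hk⟩ := blocks_cons_head t j
      subst h
      rw [blocks, if_pos rfl, hk]
      rw [hk] at IH1
      rw [unblocks_cons] at IH1 ⊢
      rw [show ((i, k+1+1) : Fin d × ℕ).2 = k+1+1 from rfl, List.replicate_succ (n := k+1),
        List.cons_append]
      rw [show ((i, k+1) : Fin d × ℕ).2 = k+1 from rfl] at IH1
      exact congrArg (List.cons i) IH1
    · rw [blocks, if_neg h, unblocks_cons]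
      simp [IH1]

lemma blocks_alt : ∀ L : List (Fin d), AltW (blocks L) := by
  intro L
  induction L using cheb.induct with
  | case1 => exact ⟨List.isChain_nil, by intro p hp; simp [blocks] at hp⟩
  | case2 i => exact ⟨List.isChain_singleton _, by intro p hp; simp [blocks] at hp; simp [hp]⟩
  | case3 i j t IH1 IH2 =>
    obtain ⟨k, r, hk⟩ := blocks_cons_head t j
    rw [hk] at IH1
    by_cases h : i = j
    · subst h
      rw [blocks, if_pos rfl, hk]
      obtain ⟨hc, hp⟩ := IH1
      constructor
      · unfold List.Chain' at hc ⊢; rw [List.isChain_cons] at hc ⊢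
        exact ⟨fun q hq => hc.1 q hq, hc.2⟩
      · intro p hp'
        rcases List.mem_cons.mp hp' with rfl | hm
        · simp
        · exact hp p (List.mem_cons_of_mem _ hm)
    · rw [blocks, if_neg h, hk]
      obtain ⟨hc, hp⟩ := IH1
      constructor
      · unfold List.Chain'; rw [List.isChain_cons_cons]
        exact ⟨fun he => h (by simpa using he), hc⟩
      · intro p hp'
        rcases List.mem_cons.mp hp' with rfl | hm
        · simp
        · exact hp p hm

lemma blocks_replicate_append : ∀ (k : ℕ), 1 ≤ k → ∀ (j : Fin d) (s : List (Fin d)),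
    (∀ a ∈ s.head?, a ≠ j) → blocks (List.replicate k j ++ s) = (j, k) :: blocks s := by
  intro k
  induction k with
  | zero => omega
  | succ k IH =>
    intro _ j s hs
    rcases Nat.eq_zero_or_pos k with rfl | hk
    · -- replicate 1 j ++ s = j :: s
      rw [List.replicate_one, List.singleton_append]
      match s with
      | [] => rfl
      | a :: s' =>
        have ha : a ≠ j := hs a rfl
        rw [blocks, if_neg (fun h => ha h.symm)]
    · have hrep : List.replicate (k+1) j ++ s = j :: (List.replicate k j ++ s) := by
        rw [List.replicate_succ, List.cons_append]
      rw [hrep]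
      have hrep2 : List.replicate k j ++ s = j :: (List.replicate (k-1) j ++ s) := by
        rw [show k = (k-1)+1 by omega, List.replicate_succ, List.cons_append]
        simp [show k - 1 + 1 - 1 = k - 1 by omega]
      have hk2 := IH hk j s hs
      rw [hrep2] at hk2 ⊢
      rw [blocks, if_pos rfl, hk2]

lemma head?_unblocks {w : List (Fin d × ℕ)} (hw : AltW w) (p : Fin d × ℕ) (hp : w.head? = some p) :
    (unblocks w).head? = some p.1 := by
  match w with
  | q :: w' =>
    have hq : q = p := by simpa using hp
    subst hq
    have h1 : 1 ≤ q.2 := hw.2 q (List.mem_cons_self)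
    rw [unblocks_cons, show q.2 = (q.2 - 1) + 1 by omega, List.replicate_succ, List.cons_append]
    rfl

lemma blocks_unblocks : ∀ w : List (Fin d × ℕ), AltW w → blocks (unblocks w) = w := by
  intro w
  induction w with
  | nil => intro _; rfl
  | cons p w' IH =>
    intro hw
    have hw' : AltW w' := ⟨hw.1.tail, fun q hq => hw.2 q (List.mem_cons_of_mem _ hq)⟩
    rw [unblocks_cons, blocks_replicate_append p.2 (hw.2 p (List.mem_cons_self)) p.1 (unblocks w')
      (by
        intro a ha
        match w', hw'.1, ha with
        | q :: w'', _, ha =>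
          rw [head?_unblocks hw' q rfl] at ha
          have hne : p.1 ≠ q.1 := (List.isChain_cons_cons.mp hw.1).1
          simp only [Option.mem_def, Option.some.injEq] at ha
          subst ha
          exact fun h => hne h.symm), IH hw']

lemma unblocks_reverse : ∀ w : List (Fin d × ℕ), unblocks w.reverse = (unblocks w).reverse := by
  intro w
  induction w with
  | nil => rfl
  | cons p w' IH =>
    rw [List.reverse_cons, unblocks_cons, List.reverse_append]
    have : unblocks (w'.reverse ++ [p]) = unblocks w'.reverse ++ unblocks [p] := by
      simp [unblocks]
    rw [this, IH]
    congr 1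
    simp [unblocks, List.reverse_replicate]

lemma AltW_reverse {w : List (Fin d × ℕ)} (hw : AltW w) : AltW w.reverse := by
  refine ⟨?_, fun p hp => hw.2 p (List.mem_reverse.mp hp)⟩
  unfold List.Chain'; rw [List.isChain_reverse]
  exact List.IsChain.imp (fun a b h => fun he => h he.symm) hw.1

lemma blocks_rev_iff (L J : List (Fin d)) :
    (blocks L).reverse = blocks J ↔ L.reverse = J := by
  constructor
  · intro h
    have := congrArg unblocks h
    rw [unblocks_reverse, unblocks_blocks, unblocks_blocks] at this
    exact this
  · rintro rfl
    have h1 : L.reverse = unblocks ((blocks L).reverse) := by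
      rw [unblocks_reverse, unblocks_blocks]
    rw [h1, blocks_unblocks _ (AltW_reverse (blocks_alt L))]


section Alg
variable {A : Type*} [Ring A] [Algebra ℂ A] (x : Fin d → A)

def evA (w : List (Fin d × ℕ)) : A :=
  (w.map fun p => Polynomial.aeval (x p.1) (chebU p.2)).prod

lemma evA_nil : evA x [] = 1 := rfl
lemma evA_cons (p : Fin d × ℕ) (w : List (Fin d × ℕ)) :
    evA x (p :: w) = Polynomial.aeval (x p.1) (chebU p.2) * evA x w := by
  simp [evA]
lemma evA_append (u v : List (Fin d × ℕ)) : evA x (u ++ v) = evA x u * evA x v := by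
  simp [evA]

lemma cheb_eq_evA : ∀ L : List (Fin d), FreeAlgebra.lift ℂ x (cheb L) = evA x (blocks L) := by
  intro L
  induction L using cheb.induct with
  | case1 => simp [cheb, evA, blocks]
  | case2 i => simp [cheb, evA, blocks, chebU]
  | case3 i j t IH1 IH2 =>
    obtain ⟨k, r, hk⟩ := blocks_cons_head t j
    rw [cheb, map_sub, map_mul, map_smul, FreeAlgebra.lift_ι_apply, IH1, IH2]
    by_cases h : i = j
    · subst h
      have hbl : blocks (i :: i :: t) = (i, k+1+1) :: r := by rw [blocks, if_pos rfl, hk]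
      rw [hbl, if_pos rfl, one_smul, hk]
      have hbt : evA x (blocks t) = Polynomial.aeval (x i) (chebU k) * evA x r := by
        rw [blocks_tail hk]
        split_ifs with h1
        · rw [show k = 0 by omega]
          simp [chebU]
        · rw [evA_cons]
          norm_num
      rw [hbt, evA_cons, evA_cons]
      have hXU : x i * Polynomial.aeval (x i) (chebU (k+1))
          = Polynomial.aeval (x i) (chebU (k+2)) + Polynomial.aeval (x i) (chebU k) := by
        have := congrArg (Polynomial.aeval (x i)) (chebU_X_mul k)
        simpa [map_add, map_mul, Polynomial.aeval_X] using this
      rw [← mul_assoc, hXU]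
      show _ = Polynomial.aeval (x i) (chebU (k+1+1)) * evA x r
      rw [show k+1+1 = k+2 from rfl]
      rw [add_mul]
      abel
    · rw [blocks, if_neg h, if_neg h, zero_smul, sub_zero, evA_cons]
      simp [chebU]

variable (τ : A →ₗ[ℂ] ℂ)

lemma trace_evA (hτ1 : τ 1 = 1)
    (hmom : ∀ i k, τ (x i ^ k) = (semicircleMoment k : ℂ))
    (hfree : ∀ (k : ℕ) (j : Fin (k + 1) → Fin d),
      (∀ s : Fin k, j s.castSucc ≠ j s.succ) →
      ∀ p : Fin (k + 1) → Polynomial ℂ,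
        τ ((List.ofFn fun s : Fin (k + 1) =>
          Polynomial.aeval (x (j s)) (p s)
            - τ (Polynomial.aeval (x (j s)) (p s)) • (1 : A))).prod = 0)
    (w : List (Fin d × ℕ)) (hw : AltW w) (hne : w ≠ []) :
    τ (evA x w) = 0 := by
  · obtain ⟨k, hk⟩ : ∃ k, w.length = k + 1 := by
      cases hl : w.length with
      | zero => exact absurd (List.length_eq_zero_iff.mp hl) hne
      | succ n => exact ⟨n, rfl⟩
    set j : Fin (k+1) → Fin d := fun s => (w.get (Fin.cast hk.symm s)).1 with hj
    set p : Fin (k+1) → Polynomial ℂ := fun s => chebU ((w.get (Fin.cast hk.symm s)).2) with hp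
    have hadj : ∀ s : Fin k, j s.castSucc ≠ j s.succ := by
      intro s
      have hc := List.isChain_iff_getElem.mp hw.1 s.1 (by have := s.2; omega)
      exact hc
    have hzero : ∀ s : Fin (k+1), τ (Polynomial.aeval (x (j s)) (p s)) = 0 := by
      intro s
      rw [hp]
      rw [moment_chebU τ (x (j s)) (hmom (j s))]
      rw [if_neg]
      have := hw.2 (w.get (Fin.cast hk.symm s)) (List.get_mem w (Fin.cast hk.symm s))
      omega
    have hlist : (List.ofFn fun s : Fin (k+1) =>
        Polynomial.aeval (x (j s)) (p s) - τ (Polynomial.aeval (x (j s)) (p s)) • (1 : A))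
        = w.map fun q => Polynomial.aeval (x q.1) (chebU q.2) := by
      apply List.ext_getElem
      · simp [hk]
      · intro n h1 h2
        simp only [List.getElem_ofFn, List.getElem_map]
        rw [hzero, zero_smul, sub_zero]
        rfl
    have := hfree k j hadj p
    rw [hlist] at this
    simpa [evA] using this

lemma trace_evA' (hτ1 : τ 1 = 1)
    (hmom : ∀ i k, τ (x i ^ k) = (semicircleMoment k : ℂ))
    (hfree : ∀ (k : ℕ) (j : Fin (k + 1) → Fin d),
      (∀ s : Fin k, j s.castSucc ≠ j s.succ) →
      ∀ p : Fin (k + 1) → Polynomial ℂ,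
        τ ((List.ofFn fun s : Fin (k + 1) =>
          Polynomial.aeval (x (j s)) (p s)
            - τ (Polynomial.aeval (x (j s)) (p s)) • (1 : A))).prod = 0)
    (w : List (Fin d × ℕ)) (hw : AltW w) :
    τ (evA x w) = if w = [] then 1 else 0 := by
  rcases eq_or_ne w [] with rfl | hne
  · rw [if_pos rfl, evA_nil, hτ1]
  · rw [if_neg hne]
    exact trace_evA x τ hτ1 hmom hfree w hw hne

lemma key_orth (hτ1 : τ 1 = 1)
    (hmom : ∀ i k, τ (x i ^ k) = (semicircleMoment k : ℂ))
    (hfree : ∀ (k : ℕ) (j : Fin (k + 1) → Fin d),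
      (∀ s : Fin k, j s.castSucc ≠ j s.succ) →
      ∀ p : Fin (k + 1) → Polynomial ℂ,
        τ ((List.ofFn fun s : Fin (k + 1) =>
          Polynomial.aeval (x (j s)) (p s)
            - τ (Polynomial.aeval (x (j s)) (p s)) • (1 : A))).prod = 0) :
    ∀ (N : ℕ) (u v : List (Fin d × ℕ)), u.length + v.length ≤ N → AltW u → AltW v →
      τ (evA x u * evA x v) = if u.reverse = v then 1 else 0 := by
  intro N
  induction N with
  | zero =>
    intro u v hlen hu hv
    obtain rfl : u = [] := List.length_eq_zero_iff.mp (by omega)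
    obtain rfl : v = [] := List.length_eq_zero_iff.mp (by omega)
    simp [evA_nil, hτ1]
  | succ N IH =>
    intro u v hlen hu hv
    rcases u.eq_nil_or_concat with rfl | ⟨u₀, p, rfl⟩
    · rw [evA_nil, one_mul, List.reverse_nil, trace_evA' x τ hτ1 hmom hfree v hv]
      congr 1
      simp [eq_comm]
    · rw [List.concat_eq_append] at *
      rcases v with _ | ⟨q, v'⟩
      · rw [evA_nil, mul_one, trace_evA x τ hτ1 hmom hfree _ hu (by simp)]
        rw [if_neg (by simp)]
      · -- u = u₀ ++ [p], v = q :: v'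
        have hu0 : AltW u₀ :=
          ⟨hu.1.prefix (List.prefix_append u₀ [p]), fun z hz => hu.2 z (List.mem_append_left _ hz)⟩
        have hv' : AltW v' := ⟨hv.1.tail, fun z hz => hv.2 z (List.mem_cons_of_mem _ hz)⟩
        have hlast : ∀ z ∈ u₀.getLast?, z.1 ≠ p.1 := by
          have := (List.isChain_append.mp hu.1).2.2
          intro z hz
          exact this z hz p rfl
        have hvhead : ∀ z ∈ v'.head?, q.1 ≠ z.1 := (List.isChain_cons.mp hv.1).1
        have hp1 : 1 ≤ p.2 := hu.2 p (List.mem_append_right _ (List.mem_singleton_self p))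
        have hq1 : 1 ≤ q.2 := hv.2 q (List.mem_cons_self)
        by_cases hj : p.1 = q.1
        · -- merge case
          rw [evA_append, evA_cons x p, evA_nil, mul_one, evA_cons x q]
          have hUU : Polynomial.aeval (x p.1) (chebU p.2) * Polynomial.aeval (x q.1) (chebU q.2)
              = ∑ r ∈ Finset.range (min p.2 q.2 + 1),
                  Polynomial.aeval (x p.1) (chebU (p.2 + q.2 - 2*r)) := by
            rw [hj, ← map_mul, chebU_mul, map_sum]
          have hexp : evA x u₀ * Polynomial.aeval (x p.1) (chebU p.2) *
              (Polynomial.aeval (x q.1) (chebU q.2) * evA x v')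
              = ∑ r ∈ Finset.range (min p.2 q.2 + 1),
                  evA x u₀ * Polynomial.aeval (x p.1) (chebU (p.2 + q.2 - 2*r)) * evA x v' := by
            rw [show evA x u₀ * Polynomial.aeval (x p.1) (chebU p.2) *
                (Polynomial.aeval (x q.1) (chebU q.2) * evA x v')
                = evA x u₀ * (Polynomial.aeval (x p.1) (chebU p.2) *
                  Polynomial.aeval (x q.1) (chebU q.2)) * evA x v' by
                    simp only [mul_assoc], hUU,
              Finset.mul_sum, Finset.sum_mul]
          rw [hexp, map_sum]
          have hterm : ∀ r ∈ Finset.range (min p.2 q.2 + 1),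
              τ (evA x u₀ * Polynomial.aeval (x p.1) (chebU (p.2 + q.2 - 2*r)) * evA x v')
              = if p.2 + q.2 - 2*r = 0 then (if u₀.reverse = v' then 1 else 0) else 0 := by
            intro r hr
            simp only [Finset.mem_range] at hr
            by_cases hc : p.2 + q.2 - 2*r = 0
            · rw [if_pos hc, hc]
              rw [show (chebU 0) = 1 from rfl, map_one, mul_one]
              exact IH u₀ v' (by simp at hlen ⊢; omega) hu0 hv'
            · rw [if_neg hc]
              have heq2 : evA x u₀ * Polynomial.aeval (x p.1) (chebU (p.2 + q.2 - 2*r)) * evA x v'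
                  = evA x (u₀ ++ (p.1, p.2 + q.2 - 2*r) :: v') := by
                rw [evA_append, evA_cons, mul_assoc]
              rw [heq2]
              apply trace_evA x τ hτ1 hmom hfree _ _ (by simp)
              constructor
              · unfold List.Chain'; rw [List.isChain_append]
                refine ⟨hu0.1, ?_, ?_⟩
                · rw [List.isChain_cons]
                  exact ⟨fun z hz => hj ▸ hvhead z hz, hv'.1⟩
                · intro z hz y hy
                  simp only [List.head?_cons, Option.mem_def, Option.some.injEq] at hy
                  subst hy
                  exact hlast z hz
              · intro z hz
                rcases List.mem_append.mp hz with hz | hz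
                · exact hu0.2 z hz
                · rcases List.mem_cons.mp hz with rfl | hz
                  · simp; omega
                  · exact hv'.2 z hz
          rw [Finset.sum_congr rfl hterm]
          have hsum : (∑ r ∈ Finset.range (min p.2 q.2 + 1),
              if p.2 + q.2 - 2*r = 0 then (if u₀.reverse = v' then 1 else 0) else (0:ℂ))
              = if p.2 = q.2 then (if u₀.reverse = v' then 1 else 0) else 0 := by
            by_cases hab : p.2 = q.2
            · rw [if_pos hab]
              rw [Finset.sum_eq_single p.2]
              · rw [if_pos (by omega)]
              · intro r hr hrne
                simp only [Finset.mem_range] at hr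
                rw [if_neg (by omega)]
              · intro hno
                simp only [Finset.mem_range] at hno
                omega
            · rw [if_neg hab]
              apply Finset.sum_eq_zero
              intro r hr
              simp only [Finset.mem_range] at hr
              rw [if_neg (by omega)]
          rw [hsum]
          rw [List.reverse_append, List.reverse_singleton, List.singleton_append]
          by_cases hab : p.2 = q.2
          · have hpq : p = q := Prod.ext hj hab
            subst hpq
            rw [if_pos rfl]
            by_cases hrv : u₀.reverse = v'
            · rw [if_pos hrv, if_pos (by rw [hrv])]
            · rw [if_neg hrv, if_neg (by intro hcon; exact hrv (by injection hcon))]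
          · rw [if_neg hab, if_neg (by
              intro hcon
              injection hcon with h1 h2
              exact hab (congrArg Prod.snd h1))]
        · -- alternating case
          rw [← evA_append]
          rw [trace_evA x τ hτ1 hmom hfree _ _ (by simp)]
          · rw [if_neg (by
              rw [List.reverse_append, List.reverse_singleton, List.singleton_append]
              intro hcon
              injection hcon with h1 h2
              exact hj (congrArg Prod.fst h1))]
          · constructor
            · unfold List.Chain'; rw [List.isChain_append]
              refine ⟨hu.1, hv.1, ?_⟩
              intro z hz y hy
              rw [List.getLast?_concat] at hz
              simp only [Option.mem_def, Option.some.injEq] at hz hy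
              subst hz
              rcases v' with _ | _
              · simp at hy; subst hy; exact hj
              · simp at hy; subst hy; exact hj
            · intro z hz
              rcases List.mem_append.mp hz with hz | hz
              · exact hu.2 z hz
              · exact hv.2 z hz

end Alg

section DerivPart
variable {d : ℕ}
  (D : Fin d → (FreeAlgebra ℂ (Fin d) →ₗ[ℂ]
      FreeAlgebra ℂ (Fin d) ⊗[ℂ] FreeAlgebra ℂ (Fin d)))
  (hD1 : ∀ i j : Fin d, D i (FreeAlgebra.ι ℂ j) =
      if i = j then (1 : FreeAlgebra ℂ (Fin d)) ⊗ₜ[ℂ] (1 : FreeAlgebra ℂ (Fin d)) else 0)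
  (hD2 : ∀ (i : Fin d) (P Q : FreeAlgebra ℂ (Fin d)),
      D i (P * Q) = D i P * ((1 : FreeAlgebra ℂ (Fin d)) ⊗ₜ[ℂ] Q)
        + (P ⊗ₜ[ℂ] (1 : FreeAlgebra ℂ (Fin d))) * D i Q)

include hD2 in
lemma D_one (i : Fin d) : D i 1 = 0 := by
  have := hD2 i 1 1
  rw [mul_one] at this
  have h1 : ((1 : FreeAlgebra ℂ (Fin d)) ⊗ₜ[ℂ] (1 : FreeAlgebra ℂ (Fin d))) = 1 := rfl
  rw [h1, mul_one, one_mul] at this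
  have := left_eq_add.mp this
  exact this

lemma cheb_mul_expand (j j' : Fin d) (s : List (Fin d)) :
    FreeAlgebra.ι ℂ j * cheb (j' :: s)
      = cheb (j :: j' :: s) + (if j = j' then (1:ℂ) else 0) • cheb s := by
  rw [cheb]
  rw [sub_add_cancel]

include hD1 hD2 in
lemma D_cheb (i : Fin d) : ∀ J : List (Fin d), D i (cheb J) =
    ∑ n ∈ Finset.range J.length, if J[n]? = some i
      then cheb (J.take n) ⊗ₜ[ℂ] cheb (J.drop (n+1)) else 0 := by
  intro J
  induction J using cheb.induct with
  | case1 =>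
    show D i (1 : FreeAlgebra ℂ (Fin d)) = _
    rw [D_one D hD2 i]
    simp
  | case2 j =>
    show D i (FreeAlgebra.ι ℂ j) = _
    rw [hD1]
    simp only [List.length_singleton, Finset.sum_range_one, List.getElem?_cons_zero,
      List.take_zero, List.drop_succ_cons, List.drop_zero]
    by_cases h : i = j
    · subst h
      rw [if_pos rfl, if_pos rfl]
      rfl
    · rw [if_neg h, if_neg (by simpa [eq_comm] using h)]
  | case3 j j' t' IH1 IH2 =>
    rw [cheb, map_sub, map_smul, hD2, hD1, IH1, IH2]
    -- names
    set c : ℂ := if j = j' then (1:ℂ) else 0 with hc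
    set t : List (Fin d) := j' :: t' with ht
    -- first term
    have hA : (if i = j then (1 : FreeAlgebra ℂ (Fin d)) ⊗ₜ[ℂ] (1 : FreeAlgebra ℂ (Fin d)) else 0)
        * ((1 : FreeAlgebra ℂ (Fin d)) ⊗ₜ[ℂ] cheb t)
        = if (j :: t)[0]? = some i then cheb ((j::t).take 0) ⊗ₜ[ℂ] cheb ((j::t).drop 1) else 0 := by
      rw [ite_mul, zero_mul, Algebra.TensorProduct.tmul_mul_tmul, one_mul, one_mul]
      by_cases h : i = j
      · subst h; rw [if_pos rfl, if_pos (by simp)]; rfl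
      · rw [if_neg h, if_neg (by simpa [eq_comm] using h)]
    rw [hA]
    -- middle term
    have hB : (FreeAlgebra.ι ℂ j ⊗ₜ[ℂ] (1 : FreeAlgebra ℂ (Fin d))) *
        (∑ n ∈ Finset.range t.length, if t[n]? = some i
          then cheb (t.take n) ⊗ₜ[ℂ] cheb (t.drop (n+1)) else 0)
        = ∑ n ∈ Finset.range t.length, if t[n]? = some i
            then (FreeAlgebra.ι ℂ j * cheb (t.take n)) ⊗ₜ[ℂ] cheb (t.drop (n+1)) else 0 := by
      rw [Finset.mul_sum]
      apply Finset.sum_congr rfl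
      intro n _
      rw [mul_ite, mul_zero, Algebra.TensorProduct.tmul_mul_tmul, one_mul]
    rw [hB]
    have hlen : t.length = t'.length + 1 := rfl
    -- expand middle sum: n = 0 and n = m+1
    rw [hlen, Finset.sum_range_succ']
    have hB0 : (if t[0]? = some i
        then (FreeAlgebra.ι ℂ j * cheb (t.take 0)) ⊗ₜ[ℂ] cheb (t.drop 1) else 0)
        = if t[0]? = some i then cheb [j] ⊗ₜ[ℂ] cheb (t.drop 1) else 0 := by
      rw [List.take_zero]
      by_cases h : t[0]? = some i
      · rw [if_pos h, if_pos h]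
        congr 1
        show FreeAlgebra.ι ℂ j * cheb [] = cheb [j]
        rw [show cheb ([] : List (Fin d)) = 1 from rfl, mul_one, cheb]
      · rw [if_neg h, if_neg h]
    rw [hB0]
    have hBm : ∀ m, (if t[m+1]? = some i
        then (FreeAlgebra.ι ℂ j * cheb (t.take (m+1))) ⊗ₜ[ℂ] cheb (t.drop (m+1+1)) else 0)
        = (if t'[m]? = some i
            then cheb (j :: t.take (m+1)) ⊗ₜ[ℂ] cheb (t'.drop (m+1)) else 0)
          + c • (if t'[m]? = some i
            then cheb (t'.take m) ⊗ₜ[ℂ] cheb (t'.drop (m+1)) else 0) := by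
      intro m
      have e1 : t[m+1]? = t'[m]? := by rw [ht, List.getElem?_cons_succ]
      have e2 : t.take (m+1) = j' :: t'.take m := by rw [ht, List.take_succ_cons]
      have e3 : t.drop (m+1+1) = t'.drop (m+1) := by rw [ht, List.drop_succ_cons]
      rw [e1, e3]
      by_cases h : t'[m]? = some i
      · rw [if_pos h, if_pos h, if_pos h, e2, cheb_mul_expand, TensorProduct.add_tmul, TensorProduct.smul_tmul']
      · rw [if_neg h, if_neg h, if_neg h, smul_zero, add_zero]
    rw [Finset.sum_congr rfl (fun m _ => hBm m), Finset.sum_add_distrib, ← Finset.smul_sum]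
    -- expand RHS
    rw [show (j :: t).length = t'.length + 1 + 1 from rfl, Finset.sum_range_succ']
    have hR : ∀ m, (if (j :: t)[m+1]? = some i
        then cheb ((j :: t).take (m+1)) ⊗ₜ[ℂ] cheb ((j :: t).drop (m+1+1)) else 0)
        = if t[m]? = some i then cheb (j :: t.take m) ⊗ₜ[ℂ] cheb (t.drop (m+1)) else 0 := by
      intro m
      rw [List.getElem?_cons_succ, List.take_succ_cons, List.drop_succ_cons]
    rw [Finset.sum_congr rfl (fun m _ => hR m)]
    -- now split that sum into m=0 and m = m'+1 to match
    rw [show t.length = t'.length + 1 from rfl] at *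
    rw [Finset.sum_range_succ' (fun m => if t[m]? = some i
      then cheb (j :: t.take m) ⊗ₜ[ℂ] cheb (t.drop (m+1)) else 0) t'.length]
    have hR' : ∀ m, (if t[m+1]? = some i
        then cheb (j :: t.take (m+1)) ⊗ₜ[ℂ] cheb (t.drop (m+1+1)) else 0)
        = if t'[m]? = some i then cheb (j :: t.take (m+1)) ⊗ₜ[ℂ] cheb (t'.drop (m+1)) else 0 := by
      intro m
      have e1 : t[m+1]? = t'[m]? := by rw [ht, List.getElem?_cons_succ]
      have e3 : t.drop (m+1+1) = t'.drop (m+1) := by rw [ht, List.drop_succ_cons]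
      rw [e1, e3]
    rw [Finset.sum_congr rfl (fun m _ => hR' m)]
    have hR0 : (if t[0]? = some i
        then cheb (j :: t.take 0) ⊗ₜ[ℂ] cheb (t.drop (0+1)) else 0)
        = if t[0]? = some i then cheb [j] ⊗ₜ[ℂ] cheb (t.drop 1) else 0 := by
      rw [List.take_zero]
    rw [hR0]
    abel

include hD1 hD2 in
lemma PhiD_cheb (tb : FreeAlgebra ℂ (Fin d) →ₗ[ℂ] ℂ)
    (hT : ∀ w : List (Fin d), tb (cheb w) = if w = [] then 1 else 0) :
    ∀ (R J : List (Fin d)), PhiD tb D R (cheb J) = if R = J then 1 else 0 := by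
  intro R
  induction R with
  | nil =>
    intro J
    show tb (cheb J) = _
    rw [hT J]
    by_cases h : J = []
    · rw [if_pos h, if_pos h.symm]
    · rw [if_neg h, if_neg (fun hh => h hh.symm)]
  | cons i r IH =>
    intro J
    show (LinearMap.mul' ℂ ℂ ∘ₗ TensorProduct.map tb (PhiD tb D r) ∘ₗ D i) (cheb J) = _
    simp only [LinearMap.comp_apply]
    rw [D_cheb D hD1 hD2 i J, map_sum, map_sum]
    have hterm : ∀ n ∈ Finset.range J.length,
        LinearMap.mul' ℂ ℂ (TensorProduct.map tb (PhiD tb D r)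
          (if J[n]? = some i then cheb (J.take n) ⊗ₜ[ℂ] cheb (J.drop (n+1)) else 0))
        = if J[n]? = some i
            then (if J.take n = [] then 1 else 0) * (if r = J.drop (n+1) then 1 else 0) else 0 := by
      intro n _
      by_cases h : J[n]? = some i
      · rw [if_pos h, if_pos h, TensorProduct.map_tmul, LinearMap.mul'_apply, hT, IH]
      · rw [if_neg h, if_neg h, map_zero, map_zero]
    rw [Finset.sum_congr rfl hterm]
    match J with
    | [] =>
      rw [if_neg (by simp)]
      simp
    | j :: t =>
      rw [show (j :: t).length = t.length + 1 from rfl, Finset.sum_range_succ']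
      have h0 : (if (j :: t)[0]? = some i
          then (if (j :: t).take 0 = [] then (1:ℂ) else 0) * (if r = (j :: t).drop 1 then 1 else 0)
          else 0)
          = if i :: r = j :: t then 1 else 0 := by
        rw [List.getElem?_cons_zero, List.take_zero, List.drop_succ_cons, List.drop_zero,
          if_pos rfl, one_mul]
        by_cases h1 : i = j
        · subst h1
          rw [if_pos rfl]
          by_cases h2 : r = t
          · subst h2; rw [if_pos rfl, if_pos rfl]
          · rw [if_neg h2, if_neg (by simp [h2])]
        · rw [if_neg (by simpa [eq_comm] using h1), if_neg (by simp [h1])]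
      have hrest : ∀ m, (if (j :: t)[m+1]? = some i
          then (if (j :: t).take (m+1) = [] then (1:ℂ) else 0)
            * (if r = (j :: t).drop (m+1+1) then 1 else 0)
          else 0) = 0 := by
        intro m
        rw [List.take_succ_cons, if_neg (List.cons_ne_nil j _), zero_mul, ite_self]
      rw [Finset.sum_congr rfl (fun m _ => hrest m), Finset.sum_const_zero, zero_add, h0]

lemma span_cheb (Q : FreeAlgebra ℂ (Fin d)) :
    Q ∈ Submodule.span ℂ (Set.range (cheb (d := d))) := by
  set T := Submodule.span ℂ (Set.range (cheb (d := d))) with hT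
  have h1 : (1 : FreeAlgebra ℂ (Fin d)) ∈ T := Submodule.subset_span ⟨[], rfl⟩
  have hι : ∀ (i : Fin d) (w : List (Fin d)), FreeAlgebra.ι ℂ i * cheb w ∈ T := by
    intro i w
    match w with
    | [] =>
      rw [show cheb ([] : List (Fin d)) = 1 from rfl, mul_one]
      exact Submodule.subset_span ⟨[i], rfl⟩
    | j :: t =>
      rw [cheb_mul_expand]
      exact Submodule.add_mem _ (Submodule.subset_span ⟨i :: j :: t, rfl⟩)
        (Submodule.smul_mem _ _ (Submodule.subset_span ⟨t, rfl⟩))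
  have hmul : ∀ (i : Fin d) (v : FreeAlgebra ℂ (Fin d)), v ∈ T → FreeAlgebra.ι ℂ i * v ∈ T := by
    intro i v hv
    induction hv using Submodule.span_induction with
    | mem z hz => obtain ⟨w, rfl⟩ := hz; exact hι i w
    | zero => rw [mul_zero]; exact Submodule.zero_mem _
    | add a b _ _ ha hb => rw [mul_add]; exact Submodule.add_mem _ ha hb
    | smul c a _ ha => rw [mul_smul_comm]; exact Submodule.smul_mem _ _ ha
  have hmain : ∀ (P : FreeAlgebra ℂ (Fin d)) (v : FreeAlgebra ℂ (Fin d)), v ∈ T → P * v ∈ T := by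
    intro P
    induction P using FreeAlgebra.induction with
    | grade0 r =>
      intro v hv
      rw [← Algebra.smul_def r v]
      exact Submodule.smul_mem _ _ hv
    | grade1 i => exact fun v hv => hmul i v hv
    | mul a b ha hb => intro v hv; rw [mul_assoc]; exact ha _ (hb _ hv)
    | add a b ha hb => intro v hv; rw [add_mul]; exact Submodule.add_mem _ (ha _ hv) (hb _ hv)
  have := hmain Q 1 h1
  rwa [mul_one] at this

end DerivPart

end AuxProofs

/-- `τ(P_{i_n,…,i_1}(x) · Q(x)) = Φ(∂_{i_1,…,i_n} Q)` where
`Φ(A_1 ⊗ ⋯ ⊗ A_{n+1}) = τ(A_1(x))⋯τ(A_{n+1}(x))`. Here `D` is the (unique)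
noncommutative derivative, and `Φ ∘ ∂_{i_1,…,i_n}` is expressed as
`PhiD (τ ∘ ev) D [i_1, …, i_n]`; the word of `cheb` is `[i_n, …, i_1]`, whence
the `List.reverse`. -/
theorem cheb_adjoint_of_deriv {d : ℕ} {A : Type*} [NormedRing A] [StarRing A]
    [CStarRing A] [CompleteSpace A] [NormedAlgebra ℂ A] [StarModule ℂ A]
    (τ : A →ₗ[ℂ] ℂ) (x : Fin d → A)
    (hτ : IsFaithfulTracialState τ) (hx : IsFreeSemicircular τ x)
    (D : Fin d → (FreeAlgebra ℂ (Fin d) →ₗ[ℂ]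
      FreeAlgebra ℂ (Fin d) ⊗[ℂ] FreeAlgebra ℂ (Fin d)))
    (hD1 : ∀ i j : Fin d, D i (FreeAlgebra.ι ℂ j) =
      if i = j then (1 : FreeAlgebra ℂ (Fin d)) ⊗ₜ[ℂ] (1 : FreeAlgebra ℂ (Fin d)) else 0)
    (hD2 : ∀ (i : Fin d) (P Q : FreeAlgebra ℂ (Fin d)),
      D i (P * Q) = D i P * ((1 : FreeAlgebra ℂ (Fin d)) ⊗ₜ[ℂ] Q)
        + (P ⊗ₜ[ℂ] (1 : FreeAlgebra ℂ (Fin d))) * D i Q)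
    (Q : FreeAlgebra ℂ (Fin d)) (L : List (Fin d)) :
    τ (FreeAlgebra.lift ℂ x (cheb L) * FreeAlgebra.lift ℂ x Q) =
      PhiD (τ ∘ₗ (FreeAlgebra.lift ℂ x).toLinearMap) D L.reverse Q := by
  obtain ⟨hτ1, -, -, -⟩ := hτ
  obtain ⟨-, hmom, hfree⟩ := hx
  have hT : ∀ w : List (Fin d), (τ ∘ₗ (FreeAlgebra.lift ℂ x).toLinearMap) (cheb w)
      = if w = [] then 1 else 0 := by
    intro w
    show τ (FreeAlgebra.lift ℂ x (cheb w)) = _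
    rw [cheb_eq_evA x w, trace_evA' x τ hτ1 hmom hfree _ (blocks_alt w)]
    by_cases h : w = []
    · subst h
      rw [show blocks ([] : List (Fin d)) = [] from rfl, if_pos rfl, if_pos rfl]
    · rw [if_neg h, if_neg (fun hb => h (by rw [← unblocks_blocks w, hb]; rfl))]
  have hQ := span_cheb Q
  induction hQ using Submodule.span_induction with
  | mem z hz =>
    obtain ⟨J, rfl⟩ := hz
    have hL : τ (FreeAlgebra.lift ℂ x (cheb L) * FreeAlgebra.lift ℂ x (cheb J))
        = if L.reverse = J then 1 else 0 := by
      rw [cheb_eq_evA, cheb_eq_evA,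
        key_orth x τ hτ1 hmom hfree ((blocks L).length + (blocks J).length) _ _ le_rfl
          (blocks_alt L) (blocks_alt J)]
      exact if_congr (blocks_rev_iff L J) rfl rfl
    rw [hL, PhiD_cheb D hD1 hD2 _ hT L.reverse J]
  | zero => simp
  | add a b _ _ ha hb =>
    rw [map_add, mul_add, map_add, map_add, ha, hb]
  | smul c a _ ha =>
    rw [map_smul, mul_smul_comm, map_smul, map_smul, ha]
end

section
/- For all tuples (i_n,…,i_1) ∈ {1,…,d}^n and (j_m,…,j_1) ∈ {1,…,d}^m, one has τ(P_{i_n,…,i_1}(x) · (P_{j_m,…,j_1}(x))*) = 1 if n = m and (i_n,…,i_1) = (j_n,…,j_1), and = 0 otherwise; that is, the family (P_{i_n,…,i_1}(x)) over all n ≥ 0 and all tuples is orthonormal for the inner product ⟨a,b⟩ := τ(a b*) on A. -/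
open scoped ComplexOrder TensorProduct

namespace ChebAux
open Polynomial Real intervalIntegral Set

noncomputable def uR : ℕ → Polynomial ℝ
  | 0 => 1
  | 1 => X
  | n + 2 => X * uR (n+1) - uR n

lemma uR_eval_cos (n : ℕ) (θ : ℝ) :
    (uR n).eval (2 * cos θ) * sin θ = sin ((n+1) * θ) := by
  induction n using Nat.strong_induction_on with
  | _ n ih =>
    match n with
    | 0 => simp [uR]
    | 1 =>
      simp only [uR, eval_X]
      rw [show ((1:ℕ)+1:ℝ)*θ = 2*θ by push_cast; ring, sin_two_mul]; ring
    | (m+2) =>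
      have h1 := ih (m+1) (by omega)
      have h2 := ih m (by omega)
      simp only [uR, eval_sub, eval_mul, eval_X, sub_mul]
      rw [mul_assoc, h1, h2]
      have e1 : ((m+2:ℕ)+1:ℝ) * θ = ((m+1:ℕ)+1:ℝ)*θ + θ := by push_cast; ring
      have e2 : ((m:ℕ)+1:ℝ) * θ = ((m+1:ℕ)+1:ℝ)*θ - θ := by push_cast; ring
      rw [e1, e2, sin_add, sin_sub]
      ring

lemma integral_cos_nat (k : ℕ) (hk : k ≠ 0) :
    ∫ θ in (0:ℝ)..π, cos (k * θ) = 0 := by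
  have hc : (k:ℝ) ≠ 0 := Nat.cast_ne_zero.mpr hk
  have := integral_comp_mul_left (a := 0) (b := π) (c := (k:ℝ))
    (f := fun x => cos x) hc
  simp only [mul_zero] at this
  rw [this, integral_cos]
  simp [Real.sin_nat_mul_pi]

lemma key_sin_integral (n : ℕ) :
    ∫ θ in (0:ℝ)..π, sin θ * sin ((n+1) * θ) = if n = 0 then π/2 else 0 := by
  have prodsum : ∀ θ : ℝ, sin θ * sin ((n+1) * θ)
      = (cos ((n:ℝ) * θ) - cos (((n:ℝ)+2) * θ)) / 2 := by
    intro θ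
    have h1 : (n:ℝ) * θ = (n+1) * θ - θ := by ring
    have h2 : ((n:ℝ)+2) * θ = (n+1) * θ + θ := by ring
    rw [h1, h2, cos_sub, cos_add]; ring
  simp_rw [prodsum]
  have i1 : IntervalIntegrable (fun θ : ℝ => cos ((n:ℝ) * θ)) MeasureTheory.volume 0 π :=
    (Real.continuous_cos.comp (continuous_const.mul continuous_id)).intervalIntegrable 0 π
  have i2 : IntervalIntegrable (fun θ : ℝ => cos (((n:ℝ)+2) * θ)) MeasureTheory.volume 0 π :=
    (Real.continuous_cos.comp (continuous_const.mul continuous_id)).intervalIntegrable 0 π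
  rw [integral_div, integral_sub i1 i2]
  have h2 : ∫ θ in (0:ℝ)..π, cos (((n:ℝ)+2) * θ) = 0 := by
    have := integral_cos_nat (n+2) (by omega)
    push_cast at this; exact this
  rcases Nat.eq_zero_or_pos n with h | h
  · subst h
    rw [h2]
    norm_num
  · have h0 := integral_cos_nat n (by omega)
    rw [h0, h2]
    simp [Nat.pos_iff_ne_zero.mp h]

lemma uR_integral (n : ℕ) :
    (1/(2*π)) * ∫ t in (-2:ℝ)..2, (uR n).eval t * sqrt (4 - t^2)
      = if n = 0 then 1 else 0 := by
  have hg : Continuous fun t : ℝ => (uR n).eval t * sqrt (4 - t^2) := by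
    apply Continuous.mul
    · exact Polynomial.continuous _
    · exact Real.continuous_sqrt.comp (by continuity)
  have hd : ∀ θ ∈ uIcc (π:ℝ) 0, HasDerivAt (fun θ : ℝ => 2 * cos θ) (-2 * sin θ) θ := by
    intro θ _
    simpa [mul_comm, neg_mul, mul_neg] using (Real.hasDerivAt_cos θ).const_mul (2:ℝ)
  have h' : ContinuousOn (fun θ : ℝ => -2 * sin θ) (uIcc (π:ℝ) 0) :=
    (continuous_const.mul Real.continuous_sin).continuousOn
  have sub := integral_comp_smul_deriv hd h' hg
  simp only [Real.cos_pi, Real.cos_zero, mul_one] at sub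
  rw [show (2:ℝ) * -1 = -2 by norm_num] at sub
  rw [← sub, integral_symm, ← intervalIntegral.integral_neg]
  have congr1 : EqOn
      (fun θ : ℝ => -((-2 * sin θ) • (((uR n).eval (2*cos θ) * sqrt (4 - (2*cos θ)^2)))))
      (fun θ : ℝ => 4 * (sin θ * sin ((n+1) * θ))) (uIcc (0:ℝ) π) := by
    intro θ hθ
    rw [uIcc_of_le Real.pi_nonneg] at hθ
    have hsn : 0 ≤ sin θ := Real.sin_nonneg_of_nonneg_of_le_pi hθ.1 hθ.2
    have hs : sqrt (4 - (2*cos θ)^2) = 2 * sin θ := by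
      have h4 : (4:ℝ) - (2*cos θ)^2 = (2 * sin θ)^2 := by
        have := Real.sin_sq_add_cos_sq θ; nlinarith
      rw [h4, Real.sqrt_sq (by linarith)]
    have he := uR_eval_cos n θ
    simp only [smul_eq_mul, hs]
    nlinarith [he]
  simp only [Function.comp]
  rw [intervalIntegral.integral_congr congr1, intervalIntegral.integral_const_mul,
    key_sin_integral]
  rcases eq_or_ne n 0 with h | h <;>
    simp [h, Real.pi_ne_zero]
  · field_simp; ring

lemma map_uR (n : ℕ) : (uR n).map (algebraMap ℝ ℂ) = chebU n := by
  induction n using Nat.strong_induction_on with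
  | _ n ih =>
    match n with
    | 0 => simp [uR, chebU]
    | 1 => simp [uR, chebU]
    | (m+2) =>
      simp [uR, chebU, Polynomial.map_sub, Polynomial.map_mul, ih (m+1) (by omega),
        ih m (by omega)]

lemma moment_sum (p : Polynomial ℝ) :
    ∑ i ∈ Finset.range (p.natDegree + 1), p.coeff i * semicircleMoment i
      = (1/(2*π)) * ∫ t in (-2:ℝ)..2, p.eval t * sqrt (4 - t^2) := by
  have hint : ∀ i : ℕ, IntervalIntegrable
      (fun t : ℝ => p.coeff i * (t ^ i * sqrt (4 - t^2))) MeasureTheory.volume (-2) 2 := by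
    intro i
    apply Continuous.intervalIntegrable
    exact continuous_const.mul ((continuous_pow i).mul
      (Real.continuous_sqrt.comp (by continuity)))
  calc ∑ i ∈ Finset.range (p.natDegree + 1), p.coeff i * semicircleMoment i
      = ∑ i ∈ Finset.range (p.natDegree + 1),
          (1/(2*π)) * ∫ t in (-2:ℝ)..2, p.coeff i * (t ^ i * sqrt (4 - t^2)) := by
        apply Finset.sum_congr rfl
        intro i _
        rw [intervalIntegral.integral_const_mul, semicircleMoment]
        ring
    _ = (1/(2*π)) * ∑ i ∈ Finset.range (p.natDegree + 1),
          ∫ t in (-2:ℝ)..2, p.coeff i * (t ^ i * sqrt (4 - t^2)) := by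
        rw [Finset.mul_sum]
    _ = (1/(2*π)) * ∫ t in (-2:ℝ)..2,
          ∑ i ∈ Finset.range (p.natDegree + 1), p.coeff i * (t ^ i * sqrt (4 - t^2)) := by
        rw [intervalIntegral.integral_finset_sum]
        intro i _
        exact hint i
    _ = (1/(2*π)) * ∫ t in (-2:ℝ)..2, p.eval t * sqrt (4 - t^2) := by
        congr 1
        apply intervalIntegral.integral_congr
        intro t _
        simp only
        rw [Polynomial.eval_eq_sum_range, Finset.sum_mul]
        apply Finset.sum_congr rfl
        intro i _
        ring

lemma uR_moment_sum (n : ℕ) :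
    ∑ i ∈ Finset.range ((uR n).natDegree + 1), (uR n).coeff i * semicircleMoment i
      = if n = 0 then 1 else 0 := by
  rw [moment_sum, uR_integral]

lemma tau_chebU {A : Type*} [Ring A] [Algebra ℂ A] (τ : A →ₗ[ℂ] ℂ) (a : A)
    (hm : ∀ k, τ (a ^ k) = (semicircleMoment k : ℂ)) (n : ℕ) :
    τ (Polynomial.aeval a (chebU n)) = if n = 0 then 1 else 0 := by
  have hdeg : (chebU n).natDegree < (uR n).natDegree + 1 := by
    rw [← map_uR]
    exact Nat.lt_succ_of_le (Polynomial.natDegree_map_le)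
  rw [Polynomial.aeval_eq_sum_range' hdeg, map_sum]
  have hc : ∀ i, (chebU n).coeff i = ((uR n).coeff i : ℂ) := by
    intro i; rw [← map_uR, Polynomial.coeff_map]; rfl
  have : ∀ i ∈ Finset.range ((uR n).natDegree + 1),
      τ ((chebU n).coeff i • a ^ i) = (((uR n).coeff i * semicircleMoment i : ℝ) : ℂ) := by
    intro i _
    rw [map_smul, hm, hc, smul_eq_mul, Complex.ofReal_mul]
  rw [Finset.sum_congr rfl this, ← Complex.ofReal_sum, uR_moment_sum]
  split <;> norm_num

/-- run-length encoding -/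
def rle {d : ℕ} : List (Fin d) → List (Fin d × ℕ)
  | [] => []
  | i :: t => match rle t with
    | [] => [(i, 1)]
    | (j, k) :: r => if i = j then (j, k+1) :: r else (i,1) :: (j,k) :: r

lemma rle_mult {d : ℕ} (M : List (Fin d)) : ∀ p ∈ rle M, 1 ≤ p.2 := by
  induction M with
  | nil => simp [rle]
  | cons i t ih =>
    cases h : rle t with
    | nil => simp [rle, h]
    | cons b r' =>
      obtain ⟨a, m⟩ := b
      rw [h] at ih
      by_cases hja : i = a
      · subst hja
        have he : rle (i :: t) = (i, m+1) :: r' := by simp [rle, h]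
        rw [he]
        intro p hp
        rcases List.mem_cons.1 hp with rfl | hp
        · omega
        · exact ih p (List.mem_cons_of_mem _ hp)
      · have he : rle (i :: t) = (i,1) :: (a,m) :: r' := by simp [rle, h, hja]
        rw [he]
        intro p hp
        rcases List.mem_cons.1 hp with rfl | hp
        · omega
        · exact ih p hp

lemma rle_head {d : ℕ} (j : Fin d) (t : List (Fin d)) :
    ∃ k r, 1 ≤ k ∧ rle (j :: t) = (j, k) :: r ∧
      rle t = if k = 1 then r else (j, k-1) :: r := by
  cases h : rle t with
  | nil => exact ⟨1, [], le_refl _, by simp [rle, h], by simp [h]⟩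
  | cons b r' =>
    obtain ⟨a, m⟩ := b
    by_cases hja : j = a
    · subst hja
      have hm : 1 ≤ m := rle_mult t (j, m) (h ▸ List.mem_cons_self)
      refine ⟨m + 1, r', by omega, by simp [rle, h], ?_⟩
      rw [if_neg (by omega)]
      simpa using h
    · exact ⟨1, (a, m) :: r', le_refl _, by simp [rle, h, hja], by simp [h]⟩

lemma rle_chain {d : ℕ} (M : List (Fin d)) :
    List.Chain' (fun p q : Fin d × ℕ => p.1 ≠ q.1) (rle M) := by
  induction M with
  | nil => simp [rle, List.Chain']
  | cons i t ih =>
    cases h : rle t with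
    | nil => simp [rle, h, List.Chain']
    | cons b r' =>
      obtain ⟨a, m⟩ := b
      rw [h] at ih
      by_cases hja : i = a
      · subst hja
        have he : rle (i :: t) = (i, m+1) :: r' := by simp [rle, h]
        rw [he]
        cases r' with
        | nil => simp [List.Chain']
        | cons q r'' =>
          simp only [List.Chain', List.isChain_cons_cons] at ih ⊢
          exact ⟨ih.1, ih.2⟩
      · have he : rle (i :: t) = (i,1) :: (a,m) :: r' := by simp [rle, h, hja]
        rw [he]
        exact List.IsChain.cons_cons hja ih

variable {d : ℕ} {A : Type*} [Ring A] [StarRing A] [Algebra ℂ A] [StarModule ℂ A]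

noncomputable def blockProd (x : Fin d → A) (bs : List (Fin d × ℕ)) : A :=
  (bs.map (fun p => Polynomial.aeval (x p.1) (chebU p.2))).prod

lemma chebU_rec (k : ℕ) (hk : 1 ≤ k) :
    chebU (k+1) = Polynomial.X * chebU k - chebU (k-1) := by
  obtain ⟨m, rfl⟩ := Nat.exists_eq_add_of_le hk
  simp only [Nat.add_sub_cancel_left]
  show chebU (1 + m + 1) = Polynomial.X * chebU (1 + m) - chebU m
  rw [show 1 + m + 1 = m + 2 by omega, show 1 + m = m + 1 by omega]
  rfl

lemma cheb_eq_blockProd (x : Fin d → A) (M : List (Fin d)) :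
    FreeAlgebra.lift ℂ x (cheb M) = blockProd x (rle M) := by
  induction M using cheb.induct with
  | case1 => simp [cheb, rle, blockProd]
  | case2 i => simp [cheb, rle, blockProd, chebU]
  | case3 i j t ih1 ih2 =>
    have unfold : ∀ (a : Fin d) (s : List (Fin d)), rle (a :: s)
        = match rle s with
          | [] => [(a, 1)]
          | (j, k) :: r => if a = j then (j, k+1) :: r else (a,1) :: (j,k) :: r := fun _ _ => rfl
    have hbp : ∀ (c : Fin d) (m : ℕ) (s : List (Fin d × ℕ)),
        blockProd x ((c, m) :: s) = Polynomial.aeval (x c) (chebU m) * blockProd x s := by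
      intro c m s; simp [blockProd]
    obtain ⟨k, r, hk, he, ht⟩ := rle_head j t
    have hrec : FreeAlgebra.lift ℂ x (cheb (i :: j :: t))
        = x i * FreeAlgebra.lift ℂ x (cheb (j :: t))
          - (if i = j then (1:ℂ) else 0) • FreeAlgebra.lift ℂ x (cheb t) := by
      rw [show cheb (i :: j :: t)
          = FreeAlgebra.ι ℂ i * cheb (j :: t) - (if i = j then (1:ℂ) else 0) • cheb t from rfl,
        map_sub, map_mul, FreeAlgebra.lift_ι_apply, map_smul]
    by_cases hij : i = j
    · subst hij
      have he2 : rle (i :: i :: t) = (i, k+1) :: r := by rw [unfold, he]; simp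
      have hcheb : Polynomial.aeval (x i) (chebU (k+1))
          = x i * Polynomial.aeval (x i) (chebU k) - Polynomial.aeval (x i) (chebU (k-1)) := by
        rw [chebU_rec k hk]
        simp [map_sub, map_mul]
      have hprev : blockProd x (if k = 1 then r else (i, k-1) :: r)
          = Polynomial.aeval (x i) (chebU (k-1)) * blockProd x r := by
        split_ifs with h1
        · subst h1; simp [chebU]
        · exact hbp _ _ _
      rw [hrec, he2, if_pos rfl, one_smul, ih1, ih2, he, ht, hprev, hbp, hbp, hcheb, sub_mul, mul_assoc]
    · have he2 : rle (i :: j :: t) = (i, 1) :: (j, k) :: r := by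
        rw [unfold, he]; simp [hij]
      rw [hrec, he2, if_neg hij, zero_smul, sub_zero, ih1, he, hbp, hbp, ← hbp]
      simp [chebU]

lemma tau_blockProd (τ : A →ₗ[ℂ] ℂ) (x : Fin d → A) (hx : IsFreeSemicircular τ x)
    (b : Fin d × ℕ) (br : List (Fin d × ℕ))
    (hchain : List.Chain' (fun p q : Fin d × ℕ => p.1 ≠ q.1) (b :: br))
    (hmult : ∀ p ∈ b :: br, 1 ≤ p.2) :
    τ (blockProd x (b :: br)) = 0 := by
  set bs : List (Fin d × ℕ) := b :: br with hbs
  set k := br.length with hk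
  have hlen : bs.length = k + 1 := rfl
  set j : Fin (k+1) → Fin d := fun s => (bs.get (Fin.cast hlen.symm s)).1 with hj
  set p : Fin (k+1) → Polynomial ℂ := fun s => chebU ((bs.get (Fin.cast hlen.symm s)).2) with hp
  have hadj : ∀ s : Fin k, j s.castSucc ≠ j s.succ := by
    intro s
    have hc := List.isChain_iff_getElem.1 hchain s.1 (by simpa [hlen] using s.isLt)
    simp only [hj]
    exact hc
  have hfree := hx.2.2 k j hadj p
  have heq : (List.ofFn fun s : Fin (k + 1) =>
      Polynomial.aeval (x (j s)) (p s)
        - τ (Polynomial.aeval (x (j s)) (p s)) • (1 : A))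
      = bs.map (fun q => Polynomial.aeval (x q.1) (chebU q.2)) := by
    apply List.ext_getElem
    · simp [hlen]
    · intro i h1 h2
      have hib : i < bs.length := by simpa using h2
      simp only [List.getElem_ofFn, List.getElem_map]
      have hmem : bs.get ⟨i, hib⟩ ∈ bs := List.get_mem bs ⟨i, hib⟩
      have hm1 : 1 ≤ (bs.get ⟨i, hib⟩).2 := hmult _ hmem
      have htau : τ (Polynomial.aeval (x ((bs.get ⟨i, hib⟩).1))
          (chebU ((bs.get ⟨i, hib⟩).2))) = 0 := by
        rw [tau_chebU τ _ (hx.2.1 _), if_neg (by omega)]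
      simp only [hj, hp]
      have hcast : (Fin.cast hlen.symm ⟨i, by simpa using h1⟩ : Fin bs.length) = ⟨i, hib⟩ := rfl
      rw [hcast, htau, zero_smul, sub_zero]
      congr 1 <;> simp [List.get_eq_getElem]
  rw [heq] at hfree
  exact hfree

lemma tau_star (τ : A →ₗ[ℂ] ℂ) (hpos : ∀ a : A, 0 ≤ τ (star a * a)) (a : A) :
    τ (star a) = starRingEnd ℂ (τ a) := by
  have him : ∀ b : A, (τ (star b * b)).im = 0 := by
    intro b
    exact ((Complex.le_def.1 (hpos b)).2).symm
  have h1im : (τ 1).im = 0 := by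
    have := him 1
    simpa using this
  have e1 : star (1 + a) * (1 + a) = 1 + a + star a + star a * a := by
    rw [star_add, star_one]
    noncomm_ring
  have i1 : (τ a).im + (τ (star a)).im = 0 := by
    have h := him (1 + a)
    rw [e1, map_add, map_add, map_add] at h
    simpa [h1im, him a] using h
  have e2 : star (1 + Complex.I • a) * (1 + Complex.I • a)
      = 1 + Complex.I • a + (-Complex.I) • star a + star a * a := by
    rw [star_add, star_one, star_smul, Complex.star_def, Complex.conj_I]
    have hcross : ((-Complex.I) • star a) * (Complex.I • a) = star a * a := by
      rw [smul_mul_assoc, mul_smul_comm, smul_smul]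
      norm_num [Complex.I_mul_I]
    have expand : (1 + (-Complex.I) • star a) * (1 + Complex.I • a)
        = 1 + Complex.I • a + (-Complex.I) • star a
          + ((-Complex.I) • star a) * (Complex.I • a) := by
      rw [add_mul, mul_add, mul_add, one_mul, one_mul, mul_one]
      abel
    rw [expand, hcross]
  have i2 : (τ a).re - (τ (star a)).re = 0 := by
    have h := him (1 + Complex.I • a)
    rw [e2, map_add, map_add, map_add, map_smul, map_smul] at h
    simp only [Complex.add_im, h1im, him a, Complex.smul_im, Complex.smul_re] at h
    simp [Complex.mul_im, Complex.mul_re] at h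
    linarith
  apply Complex.ext
  · simp [Complex.conj_re]; linarith
  · simp [Complex.conj_im]; linarith

lemma tau_cheb_eval (τ : A →ₗ[ℂ] ℂ) (x : Fin d → A) (h1 : τ 1 = 1)
    (hx : IsFreeSemicircular τ x) (M : List (Fin d)) :
    τ (FreeAlgebra.lift ℂ x (cheb M)) = if M = [] then 1 else 0 := by
  cases M with
  | nil => simpa [cheb] using h1
  | cons i t =>
    rw [cheb_eq_blockProd, if_neg (by simp)]
    obtain ⟨k, r, hk, he, -⟩ := rle_head i t
    have hchain := rle_chain (i :: t)
    have hmult := rle_mult (i :: t)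
    rw [he] at hchain hmult ⊢
    exact tau_blockProd τ x hx _ _ hchain hmult


variable (τ : A →ₗ[ℂ] ℂ) (x : Fin d → A)

noncomputable def annE (i : Fin d) : List (Fin d) → A
  | [] => 0
  | j :: t => if i = j then FreeAlgebra.lift ℂ x (cheb t) else 0

lemma creation (i : Fin d) (L : List (Fin d)) :
    x i * FreeAlgebra.lift ℂ x (cheb L)
      = FreeAlgebra.lift ℂ x (cheb (i :: L)) + annE x i L := by
  cases L with
  | nil => simp [cheb, annE]
  | cons j t =>
    rw [show cheb (i :: j :: t)
        = FreeAlgebra.ι ℂ i * cheb (j :: t) - (if i = j then (1:ℂ) else 0) • cheb t from rfl,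
      map_sub, map_mul, FreeAlgebra.lift_ι_apply, map_smul]
    rw [annE, ite_smul, one_smul, zero_smul]
    split_ifs <;> abel


def annDeltaR (i : Fin d) (M L' : List (Fin d)) : ℂ :=
  match M with
  | [] => 0
  | j :: s => if i = j then (if L' = s then (1:ℂ) else 0) else 0

def annDeltaL (i : Fin d) (L' M : List (Fin d)) : ℂ :=
  match L' with
  | [] => 0
  | a :: t => if i = a then (if t = M then (1:ℂ) else 0) else 0

lemma delta_identity (i : Fin d) (L M : List (Fin d)) :
    ((if L = i :: M then (1:ℂ) else 0) + annDeltaR i M L) - annDeltaL i L M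
    = if i :: L = M then 1 else 0 := by
  unfold annDeltaR annDeltaL
  by_cases hLM : L = i :: M
  · subst hLM
    have h1 : i :: i :: M ≠ M := by
      intro h
      have := congrArg List.length h
      simp at this
      omega
    have h2 : (match M with
       | (List.nil : List (Fin d)) => (0:ℂ)
       | j :: s => if i = j then (if i :: M = s then (1:ℂ) else 0) else 0) = 0 := by
      cases M with
      | nil => rfl
      | cons j s =>
        simp only
        split_ifs with h3 h4
        · exfalso
          have := congrArg List.length h4
          simp at this
          omega
        · rfl
        · rfl
    simp only [if_pos rfl, h2, if_neg h1]
    simp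
  · rw [if_neg hLM]
    have h3 : (match L with
       | (List.nil : List (Fin d)) => (0:ℂ)
       | a :: t => if i = a then (if t = M then (1:ℂ) else 0) else 0) = 0 := by
      cases L with
      | nil => rfl
      | cons a t =>
        simp only
        split_ifs with h4 h5
        · exact absurd (by rw [h4, h5]) hLM
        · rfl
        · rfl
    rw [h3]
    cases M with
    | nil => simp
    | cons j s =>
      simp only
      by_cases hij : i = j
      · subst hij
        by_cases hLs : L = s
        · subst hLs
          simp
        · rw [if_pos rfl, if_neg hLs, if_neg (by simp [List.cons.injEq, hLs])]
          ring
      · rw [if_neg hij, if_neg (by intro h; injection h with ha _; exact hij ha)]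
        ring

lemma main_ortho (htc : ∀ M : List (Fin d),
      τ (FreeAlgebra.lift ℂ x (cheb M)) = if M = [] then 1 else 0)
    (hts : ∀ a : A, τ (star a) = starRingEnd ℂ (τ a))
    (hτtr : ∀ a b : A, τ (a * b) = τ (b * a))
    (hsa : ∀ i, star (x i) = x i) :
    ∀ (n : ℕ) (L M : List (Fin d)), L.length = n →
      τ (FreeAlgebra.lift ℂ x (cheb L) * star (FreeAlgebra.lift ℂ x (cheb M)))
        = if L = M then 1 else 0 := by
  intro n
  induction n using Nat.strong_induction_on with
  | _ n ih =>
    intro L M hL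
    cases L with
    | nil =>
      rw [show cheb ([] : List (Fin d)) = 1 from rfl, map_one, one_mul, hts,
        htc M]
      rcases eq_or_ne M ([] : List (Fin d)) with rfl | h
      · simp
      · rw [if_neg h, if_neg (fun h' => h h'.symm)]
        simp
    | cons i L' =>
      have hE : FreeAlgebra.lift ℂ x (cheb (i :: L'))
          = x i * FreeAlgebra.lift ℂ x (cheb L') - annE x i L' := by
        rw [creation]; abel
      rw [hE, sub_mul, map_sub]
      have step1 : τ (x i * FreeAlgebra.lift ℂ x (cheb L')
            * star (FreeAlgebra.lift ℂ x (cheb M)))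
          = τ (FreeAlgebra.lift ℂ x (cheb L')
            * star (FreeAlgebra.lift ℂ x (cheb (i :: M))))
          + τ (FreeAlgebra.lift ℂ x (cheb L') * star (annE x i M)) := by
        have hst : star (FreeAlgebra.lift ℂ x (cheb M)) * x i
            = star (FreeAlgebra.lift ℂ x (cheb (i :: M)) + annE x i M) := by
          rw [← creation, star_mul, hsa]
        rw [mul_assoc, hτtr, mul_assoc, hst, star_add, mul_add, map_add]
      rw [step1]
      simp only [List.length_cons] at hL
      have hL'len : L'.length < n := by omega
      have ih1 := ih L'.length hL'len L' (i :: M) rfl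
      have ih2 : τ (FreeAlgebra.lift ℂ x (cheb L') * star (annE x i M))
          = annDeltaR i M L' := by
        unfold annDeltaR
        cases M with
        | nil => simp [annE]
        | cons j s =>
          rw [annE]
          by_cases hij : i = j
          · rw [if_pos hij, ih L'.length hL'len L' s rfl]
            simp [hij]
          · rw [if_neg hij]
            simp [hij]
      have ih3 : τ (annE x i L' * star (FreeAlgebra.lift ℂ x (cheb M)))
          = annDeltaL i L' M := by
        unfold annDeltaL
        cases L' with
        | nil => simp [annE]
        | cons a t =>
          rw [annE]
          by_cases hia : i = a
          · rw [if_pos hia, ih t.length (by simp at hL; omega) t M rfl]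
            simp [hia]
          · rw [if_neg hia]
            simp [hia]
      rw [ih1, ih2, ih3]
      exact delta_identity i L' M


end ChebAux

/-- Orthonormality of the evaluated free Chebyshev polynomials with respect to the
inner product `⟨a, b⟩ = τ(a b*)`. -/
theorem cheb_orthonormal {d : ℕ} {A : Type*} [NormedRing A] [StarRing A]
    [CStarRing A] [CompleteSpace A] [NormedAlgebra ℂ A] [StarModule ℂ A]
    (τ : A →ₗ[ℂ] ℂ) (x : Fin d → A)
    (hτ : IsFaithfulTracialState τ) (hx : IsFreeSemicircular τ x)
    (L M : List (Fin d)) :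
    τ (FreeAlgebra.lift ℂ x (cheb L) * star (FreeAlgebra.lift ℂ x (cheb M))) =
      if L = M then 1 else 0 := by
  obtain ⟨h1, hpos, _, htr⟩ := hτ
  exact ChebAux.main_ortho τ x (ChebAux.tau_cheb_eval τ x h1 hx)
    (ChebAux.tau_star τ hpos) htr hx.1 L.length L M rfl
end

section
/- For all k ∈ {1,…,d}, all n ≥ 1 and all indices i_1,…,i_n ∈ {1,…,d}, one has ∂_k P_{i_n,…,i_1} = Σ_{j=1}^{n} δ_{i_j,k} · P_{i_n,…,i_{j+1}} ⊗ P_{i_{j−1},…,i_1} (with the conventions that the empty tuple gives P_∅ = 1). -/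
open scoped ComplexOrder TensorProduct

theorem twoStepInd {α : Type*} {P : List α → Prop} (h0 : P []) (h1 : ∀ a, P [a])
    (h2 : ∀ a b l, P (b :: l) → P l → P (a :: b :: l)) : ∀ l, P l
  | [] => h0
  | [a] => h1 a
  | a :: b :: l => h2 a b l (twoStepInd h0 h1 h2 (b :: l)) (twoStepInd h0 h1 h2 l)

lemma mul_cheb_cons {d : ℕ} (i j : Fin d) (w : List (Fin d)) :
    FreeAlgebra.ι ℂ i * cheb (j :: w)
      = cheb (i :: j :: w) + (if i = j then (1 : ℂ) else 0) • cheb w := by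
  rw [show cheb (i :: j :: w) = FreeAlgebra.ι ℂ i * cheb (j :: w)
    - (if i = j then (1 : ℂ) else 0) • cheb w from rfl]
  abel

set_option maxHeartbeats 2000000 in
theorem cheb_deriv_aux {d : ℕ}
    (D : Fin d → (FreeAlgebra ℂ (Fin d) →ₗ[ℂ]
      FreeAlgebra ℂ (Fin d) ⊗[ℂ] FreeAlgebra ℂ (Fin d)))
    (hD1 : ∀ i j : Fin d, D i (FreeAlgebra.ι ℂ j) =
      if i = j then (1 : FreeAlgebra ℂ (Fin d)) ⊗ₜ[ℂ] (1 : FreeAlgebra ℂ (Fin d)) else 0)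
    (hD2 : ∀ (i : Fin d) (P Q : FreeAlgebra ℂ (Fin d)),
      D i (P * Q) = D i P * ((1 : FreeAlgebra ℂ (Fin d)) ⊗ₜ[ℂ] Q)
        + (P ⊗ₜ[ℂ] (1 : FreeAlgebra ℂ (Fin d))) * D i Q)
    (k : Fin d) : ∀ (L : List (Fin d)),
    D k (cheb L) =
      ∑ t : Fin L.length,
        (if L.get t = k then (1 : ℂ) else 0) •
          (cheb (L.take t) ⊗ₜ[ℂ] cheb (L.drop (t + 1))) := by
  have hD0 : D k (1 : FreeAlgebra ℂ (Fin d)) = 0 := by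
    have h := hD2 k 1 1
    rw [one_mul, ← Algebra.TensorProduct.one_def, mul_one, one_mul] at h
    exact (right_eq_add.mp h)
  refine twoStepInd ?_ ?_ ?_
  · simpa [cheb] using hD0
  · intro a
    simp only [cheb, hD1]
    simp [Fin.sum_univ_one, cheb, eq_comm]
  · intro i j t ih1 ih2
    rw [show cheb (i :: j :: t) = FreeAlgebra.ι ℂ i * cheb (j :: t)
      - (if i = j then (1 : ℂ) else 0) • cheb t from rfl]
    rw [map_sub, map_smul, hD2, hD1, ih1, ih2]
    have cheb_nil : (cheb [] : FreeAlgebra ℂ (Fin d)) = 1 := rfl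
    have cheb_single : ∀ a : Fin d, cheb [a] = FreeAlgebra.ι ℂ a := fun _ => rfl
    have hsplit : ∀ (c : Prop) [Decidable c]
        (a b : FreeAlgebra ℂ (Fin d) ⊗[ℂ] FreeAlgebra ℂ (Fin d)),
        (if c then a + b else 0) = (if c then a else 0) + (if c then b else 0) := by
      intros c _ a b; split <;> simp
    have hgetsucc : ∀ (a : Fin d) (l : List (Fin d)) (u : Fin l.length),
        (a :: l).get u.succ = l.get u := fun _ _ _ => rfl
    by_cases hij : i = j
    · simp only [if_pos hij, one_smul, List.length_cons, Fin.sum_univ_succ,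
        List.get_cons_zero, Fin.val_zero, List.take_zero, List.drop_one, Fin.val_succ,
        List.get_cons_succ, List.take_succ_cons, List.drop_succ_cons, List.drop_zero,
        List.take_nil, Finset.mul_sum, mul_smul_comm,
        Algebra.TensorProduct.tmul_mul_tmul, one_mul, mul_one, mul_cheb_cons, if_pos hij,
        TensorProduct.add_tmul, TensorProduct.smul_tmul', smul_add, Finset.sum_add_distrib,
        ite_mul, zero_mul, ite_smul, zero_smul, cheb_nil, eq_comm,
        mul_add, mul_ite, mul_zero, hgetsucc, cheb_single, hsplit, Finset.sum_add_distrib]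
      abel
    · simp only [if_neg hij, zero_smul, smul_zero, sub_zero, List.length_cons,
        Fin.sum_univ_succ, List.get_cons_zero, Fin.val_zero, List.take_zero, List.drop_one,
        Fin.val_succ, List.get_cons_succ, List.take_succ_cons, List.drop_succ_cons,
        List.drop_zero, List.take_nil, Finset.mul_sum, mul_smul_comm,
        Algebra.TensorProduct.tmul_mul_tmul, one_mul, mul_one, mul_cheb_cons, if_neg hij,
        TensorProduct.add_tmul, TensorProduct.smul_tmul', smul_add, add_zero,
        Finset.sum_add_distrib, Finset.sum_const_zero, TensorProduct.zero_tmul,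
        ite_mul, zero_mul, ite_smul, cheb_nil, eq_comm,
        mul_add, mul_ite, mul_zero, hgetsucc, one_smul, cheb_single]

/-- The noncommutative derivative of a free Chebyshev polynomial:
`∂_k P_{i_n,…,i_1} = Σ_j δ_{i_j,k} P_{i_n,…,i_{j+1}} ⊗ P_{i_{j−1},…,i_1}`.
Here `D` is the (unique) noncommutative derivative, characterized by its value on
generators and the Leibniz rule. -/
theorem cheb_deriv {d : ℕ}
    (D : Fin d → (FreeAlgebra ℂ (Fin d) →ₗ[ℂ]
      FreeAlgebra ℂ (Fin d) ⊗[ℂ] FreeAlgebra ℂ (Fin d)))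
    (hD1 : ∀ i j : Fin d, D i (FreeAlgebra.ι ℂ j) =
      if i = j then (1 : FreeAlgebra ℂ (Fin d)) ⊗ₜ[ℂ] (1 : FreeAlgebra ℂ (Fin d)) else 0)
    (hD2 : ∀ (i : Fin d) (P Q : FreeAlgebra ℂ (Fin d)),
      D i (P * Q) = D i P * ((1 : FreeAlgebra ℂ (Fin d)) ⊗ₜ[ℂ] Q)
        + (P ⊗ₜ[ℂ] (1 : FreeAlgebra ℂ (Fin d))) * D i Q)
    (k : Fin d) (L : List (Fin d)) (hL : L ≠ []) :
    D k (cheb L) =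
      ∑ t : Fin L.length,
        (if L.get t = k then (1 : ℂ) else 0) •
          (cheb (L.take t) ⊗ₜ[ℂ] cheb (L.drop (t + 1))) := by
  exact cheb_deriv_aux D hD1 hD2 k L
end

section
/- For all tuples (i_n,…,i_1) ∈ {1,…,d}^n and (j_m,…,j_1) ∈ {1,…,d}^m, one has P_{i_n,…,i_1} · P_{j_m,…,j_1} = Σ_{s=0}^{min(n,m)} [i_r = j_{m−r+1} for all 1 ≤ r ≤ s] · P_{i_n,…,i_{s+1},j_{m−s},…,j_1}, where [·] denotes the indicator (equal to 1 if the condition holds and 0 otherwise) and P_{i_n,…,i_{s+1},j_{m−s},…,j_1} is the free Chebyshev polynomial indexed by the concatenated word of length n+m−2s. -/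
open scoped ComplexOrder TensorProduct

noncomputable section ChebAux

theorem cheb_append_single {d : ℕ} (j : Fin d) :
    ∀ L : List (Fin d), cheb (L ++ [j]) =
      cheb L * FreeAlgebra.ι ℂ j -
        (if L.getLast? = some j then (1:ℂ) else 0) • cheb L.dropLast
  | [] => by simp [cheb]
  | [i] => by simp [cheb]
  | i :: k :: t => by
      have h1 := cheb_append_single j (k :: t)
      have h2 := cheb_append_single j t
      match t with
      | [] =>
        show cheb [i, k, j] = _
        simp only [cheb] at h1 ⊢
        simp only [List.getLast?_cons_cons, List.getLast?_singleton, List.dropLast,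
          cheb, Option.some.injEq]
        split_ifs <;> simp_all <;> noncomm_ring
      | a :: t' =>
        show cheb (i :: k :: ((a :: t') ++ [j])) = _
        have hc : cheb (i :: k :: ((a :: t') ++ [j]))
            = FreeAlgebra.ι ℂ i * cheb (k :: ((a :: t') ++ [j]))
              - (if i = k then (1:ℂ) else 0) • cheb ((a :: t') ++ [j]) := rfl
        rw [hc]
        rw [show (k :: ((a :: t') ++ [j])) = (k :: a :: t') ++ [j] by rfl, h1, h2]
        simp only [List.getLast?_cons_cons, List.dropLast_cons₂]
        rw [show cheb (i :: k :: (a :: t').dropLast)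
            = FreeAlgebra.ι ℂ i * cheb (k :: (a :: t').dropLast)
              - (if i = k then (1:ℂ) else 0) • cheb ((a :: t').dropLast) from rfl]
        rw [show cheb (i :: k :: a :: t')
            = FreeAlgebra.ι ℂ i * cheb (k :: a :: t')
              - (if i = k then (1:ℂ) else 0) • cheb (a :: t') from rfl]
        simp only [mul_sub, sub_mul, smul_sub, mul_smul_comm, smul_mul_assoc, smul_smul,
          mul_assoc]
        rw [mul_comm]
        abel

def chebT {d : ℕ} (L M : List (Fin d)) : FreeAlgebra ℂ (Fin d) :=
  ∑ s ∈ Finset.range (min L.length M.length + 1),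
    (if (L.drop (L.length - s)).reverse = M.take s then (1 : ℂ) else 0) •
      cheb (L.take (L.length - s) ++ M.drop s)

lemma chebT_nil_right {d : ℕ} (L : List (Fin d)) : chebT L [] = cheb L := by
  simp [chebT]

lemma chebT_nil_left {d : ℕ} (M : List (Fin d)) : chebT [] M = cheb M := by
  simp [chebT]

lemma chebT_step {d : ℕ} (B N : List (Fin d)) (g j : Fin d) :
    chebT (B ++ [g]) (j :: N) =
      cheb ((B ++ [g]) ++ (j :: N)) + (if g = j then (1:ℂ) else 0) • chebT B N := by
  unfold chebT
  simp only [List.length_append, List.length_cons, List.length_nil, Nat.zero_add,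
    Nat.succ_min_succ]
  rw [Finset.sum_range_succ', add_comm]
  congr 1
  · simp [List.take_of_length_le]
  · rw [Finset.smul_sum]
    refine Finset.sum_congr rfl fun s hs => ?_
    simp only [Finset.mem_range] at hs
    have hsB : s ≤ B.length := by omega
    have h1 : B.length + 1 - (s + 1) = B.length - s := by omega
    rw [h1, List.drop_append_of_le_length (by omega),
      List.take_append_of_le_length (by omega), List.reverse_append]
    simp only [List.reverse_singleton, List.singleton_append, List.take_succ_cons,
      List.drop_succ_cons, List.cons.injEq]
    by_cases hgj : g = j <;>
      by_cases hX : (B.drop (B.length - s)).reverse = N.take s <;>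
      simp [hgj, hX]

theorem cheb_mul_aux {d : ℕ} : ∀ (M L : List (Fin d)), cheb L * cheb M = chebT L M
  | [], L => by rw [chebT_nil_right]; simp [cheb]
  | [j], L => by
      rcases List.eq_nil_or_concat L with rfl | ⟨B, g, rfl⟩
      · rw [chebT_nil_left]; simp [cheb]
      · simp only [List.concat_eq_append]
        rw [chebT_step, chebT_nil_right,
          show cheb [j] = FreeAlgebra.ι ℂ j from rfl,
          cheb_append_single j (B ++ [g])]
        simp [List.getLast?_concat]
  | j :: k :: M', L => by
      rcases List.eq_nil_or_concat L with rfl | ⟨B, g, rfl⟩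
      · rw [chebT_nil_left]
        have : cheb (d := d) [] = 1 := rfl
        rw [this, one_mul]
      · simp only [List.concat_eq_append]
        have IH1 := cheb_mul_aux (k :: M') ((B ++ [g]) ++ [j])
        have IH2 := cheb_mul_aux (k :: M') ((B ++ [g]).dropLast)
        have IH3 := cheb_mul_aux M' (B ++ [g])
        rw [chebT_step,
          show cheb (j :: k :: M') = FreeAlgebra.ι ℂ j * cheb (k :: M')
            - (if j = k then (1:ℂ) else 0) • cheb M' from rfl,
          mul_sub, mul_smul_comm, ← mul_assoc, IH3]
        have hA := cheb_append_single j (B ++ [g])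
        rw [eq_sub_iff_add_eq] at hA
        rw [← hA, add_mul, smul_mul_assoc, IH1, IH2, chebT_step]
        simp only [List.getLast?_concat, List.dropLast_concat, Option.some.injEq,
          List.append_assoc, List.singleton_append, List.cons_append, List.nil_append]
        module

end ChebAux

/-- The product formula for free Chebyshev polynomials:
`P_{i_n,…,i_1} · P_{j_m,…,j_1}
  = Σ_{s=0}^{min(n,m)} [i_r = j_{m−r+1} for 1 ≤ r ≤ s] P_{i_n,…,i_{s+1},j_{m−s},…,j_1}`. -/
theorem cheb_mul {d : ℕ} (L M : List (Fin d)) :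
    cheb L * cheb M =
      ∑ s ∈ Finset.range (min L.length M.length + 1),
        (if (L.drop (L.length - s)).reverse = M.take s then (1 : ℂ) else 0) •
          cheb (L.take (L.length - s) ++ M.drop s) := by
  have h := cheb_mul_aux M L
  unfold chebT at h
  exact h
end

section
/- Let k ≥ 1, let i_1,…,i_k ∈ {1,…,d} satisfy i_j ≠ i_{j+1} for all 1 ≤ j ≤ k−1, and let d_1,…,d_k ≥ 1. Then the free Chebyshev polynomial indexed by the word consisting of d_1 copies of i_1 followed by d_2 copies of i_2, …, followed by d_k copies of i_k equals the product 𝒰_{d_1}(X_{i_1})·𝒰_{d_2}(X_{i_2})⋯𝒰_{d_k}(X_{i_k}) in ℂ⟨X_1,…,X_d⟩. -/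
open scoped ComplexOrder TensorProduct

lemma cheb_rep {d : ℕ} (i : Fin d) (L : List (Fin d)) (h : ∀ j ∈ L.head?, j ≠ i) :
    ∀ m : ℕ, cheb (List.replicate m i ++ L) =
      Polynomial.aeval (FreeAlgebra.ι ℂ i) (chebU m) * cheb L
  | 0 => by simp [chebU]
  | 1 => by
    simp only [List.replicate_one, List.singleton_append, chebU, Polynomial.aeval_X]
    cases L with
    | nil => simp [cheb]
    | cons j t =>
      have hj : j ≠ i := h j rfl
      have : ¬ (i = j) := fun e => hj e.symm
      simp [cheb, this]
  | (m + 2) => by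
    have e1 : List.replicate (m + 2) i ++ L = i :: i :: (List.replicate m i ++ L) := by
      simp [List.replicate_succ]
    have e2 : (i :: (List.replicate m i ++ L) : List (Fin d))
        = List.replicate (m + 1) i ++ L := by
      simp [List.replicate_succ]
    rw [e1]
    show FreeAlgebra.ι ℂ i * cheb (i :: (List.replicate m i ++ L))
        - (if i = i then (1 : ℂ) else 0) • cheb (List.replicate m i ++ L) = _
    rw [if_pos rfl, one_smul, e2, cheb_rep i L h (m + 1), cheb_rep i L h m]
    simp only [chebU, map_sub, map_mul, Polynomial.aeval_X]
    noncomm_ring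

lemma cheb_list {d : ℕ} (L : List (Fin d × ℕ)) (h1 : ∀ p ∈ L, 1 ≤ p.2)
    (h2 : L.Chain' (fun p q => p.1 ≠ q.1)) :
    cheb (L.map (fun p => List.replicate p.2 p.1)).flatten =
      (L.map fun p => Polynomial.aeval (FreeAlgebra.ι ℂ p.1) (chebU p.2)).prod := by
  induction L with
  | nil => simp [cheb]
  | cons p t ih =>
    simp only [List.map_cons, List.flatten_cons, List.prod_cons]
    have hhead : ∀ j ∈ (List.map (fun p => List.replicate p.2 p.1) t).flatten.head?,
        j ≠ p.1 := by
      cases t with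
      | nil => simp
      | cons q t' =>
        obtain ⟨qi, qn⟩ := q
        intro j hj
        have hq2 : 1 ≤ qn := h1 ⟨qi, qn⟩ (by simp)
        obtain ⟨n, rfl⟩ : ∃ n, qn = n + 1 := ⟨qn - 1, by omega⟩
        simp only [List.map_cons, List.flatten_cons, List.replicate_succ,
          List.cons_append, List.head?_cons, Option.mem_def, Option.some.injEq] at hj
        subst hj
        exact (List.isChain_cons_cons.mp h2).1.symm
    rw [cheb_rep p.1 _ hhead p.2,
      ih (fun q hq => h1 q (List.mem_cons_of_mem _ hq)) (List.IsChain.tail h2)]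

/-- The free Chebyshev polynomial indexed by the word
`i_1^{d_1} i_2^{d_2} ⋯ i_k^{d_k}` (with `i_j ≠ i_{j+1}`) equals the product
`𝒰_{d_1}(X_{i_1}) ⋯ 𝒰_{d_k}(X_{i_k})`. -/
theorem cheb_factorization {d k : ℕ} (hk : 1 ≤ k) (is : Fin k → Fin d)
    (his : ∀ j : Fin (k - 1), is ⟨j, by omega⟩ ≠ is ⟨j + 1, by omega⟩)
    (dd : Fin k → ℕ) (hdd : ∀ j, 1 ≤ dd j) :
    cheb ((List.ofFn fun j : Fin k => List.replicate (dd j) (is j)).flatten) =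
      (List.ofFn fun j : Fin k =>
        Polynomial.aeval (FreeAlgebra.ι ℂ (is j)) (chebU (dd j))).prod := by
  have key := cheb_list (List.ofFn fun j : Fin k => (is j, dd j))
    (by
      intro p hp
      simp only [List.mem_ofFn] at hp
      obtain ⟨j, rfl⟩ := hp
      exact hdd j)
    (by
      refine List.isChain_iff_getElem.mpr ?_
      intro n hn
      simp only [List.length_ofFn] at hn
      have h1 : n < k := by omega
      have h2 : n + 1 < k := by omega
      simp only [List.getElem_ofFn]
      have := his ⟨n, by omega⟩
      simpa using this)
  simpa [List.map_ofFn, Function.comp_def] using key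
end
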